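/- arXiv:1703.07238 — 6 statements merged into one kernel-verified Lean document; each statement's English description precedes it below -/
import Mathlib

section
/- The finite symplectic group Sp(2n, F) is generated by: the block-diagonal subgroup H of matrices diag(a, (aᵀ)⁻¹) with a ∈ GL(n,F); the subgroup N₊ of matrices [[1,b],[0,1]] with b = bᵀ; and the partial Fourier elements J_k (the matrix acting as the standard rotation (x_k, y_k) ↦ (−y_k, x_k) in the k-th coordinate pair and identity elsewhere), for k = 1, …, n. -/
open Matrix

section
variable {F : Type*} [Field F] {n : ℕ}

/-- The matrix of the standard symplectic form: `J = [[0,1],[-1,0]]`. -/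
def Jstd (F : Type*) [Field F] (n : ℕ) : Matrix (Fin n ⊕ Fin n) (Fin n ⊕ Fin n) F :=
  Matrix.fromBlocks 0 1 (-1) 0

/-- The partial Fourier element `J_k`: it acts as `(x_k, y_k) ↦ (−y_k, x_k)` on the
`k`-th coordinate pair and as the identity on all other coordinates. -/
def Jel (F : Type*) [Field F] {n : ℕ} (k : Fin n) :
    Matrix (Fin n ⊕ Fin n) (Fin n ⊕ Fin n) F :=
  Matrix.fromBlocks (1 - Matrix.single k k 1) (Matrix.single k k 1)
    (-(Matrix.single k k 1)) (1 - Matrix.single k k 1)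

/-- The block-diagonal subgroup `H`: matrices `diag(a, (aᵀ)⁻¹)` with `a ∈ GL(n,F)`. -/
def genH (F : Type*) [Field F] (n : ℕ) :
    Set (Matrix (Fin n ⊕ Fin n) (Fin n ⊕ Fin n) F) :=
  {g | ∃ a : Matrix (Fin n) (Fin n) F, IsUnit a.det ∧
    g = Matrix.fromBlocks a 0 0 a.transpose⁻¹}

/-- The subgroup `N₊`: matrices `[[1,b],[0,1]]` with `b` symmetric. -/
def genN (F : Type*) [Field F] (n : ℕ) :
    Set (Matrix (Fin n ⊕ Fin n) (Fin n ⊕ Fin n) F) :=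
  {g | ∃ b : Matrix (Fin n) (Fin n) F, b.transpose = b ∧
    g = Matrix.fromBlocks 1 b 0 1}

/-- The set of partial Fourier elements `J_k`, `k = 1, …, n`. -/
def genJ (F : Type*) [Field F] (n : ℕ) :
    Set (Matrix (Fin n ⊕ Fin n) (Fin n ⊕ Fin n) F) :=
  {g | ∃ k : Fin n, g = Jel F k}

end


section
open Module Submodule
variable {F : Type*} [Field F] {n : ℕ}

/-- Rank normal form stage 0: adapted bases. -/
lemma exists_adapted_bases (f : (Fin n → F) →ₗ[F] (Fin n → F)) :
    ∃ (B B' : Basis (Fin n) F (Fin n → F)) (S : Finset (Fin n)),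
      ∀ j, f (B j) = if j ∈ S then B' j else 0 := by
  classical
  set V := (Fin n → F)
  obtain ⟨p, hcompl⟩ := Submodule.exists_isCompl (LinearMap.ker f)
  set K := LinearMap.ker f
  set s := finrank F K
  set r := finrank F p
  have hsr : s + r = n := by
    have := Submodule.finrank_add_eq_of_isCompl hcompl
    simpa [s, r, Module.finrank_pi, Fintype.card_fin] using this
  let bK : Basis (Fin s) F K := finBasis F K
  let bp : Basis (Fin r) F p := finBasis F p
  let B0 : Basis (Fin s ⊕ Fin r) F V :=
    (bK.prod bp).map (Submodule.prodEquivOfIsCompl K p hcompl)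
  -- the image family
  let w : Fin r → V := fun i => f (bp i)
  have hwli : LinearIndependent F w := by
    have h1 : LinearIndependent F (fun i => ((bp i : V))) :=
      (bp.linearIndependent.map' p.subtype (ker_subtype p))
    refine h1.map ?_
    have hspan : span F (Set.range fun i => ((bp i : V))) = p := by
      have : (Set.range fun i => ((bp i : V))) = Subtype.val '' Set.range bp := by
        rw [← Set.range_comp]; rfl
      rw [this]
      rw [show (Subtype.val '' Set.range ⇑bp) = p.subtype '' Set.range ⇑bp from rfl]
      rw [← Submodule.map_span p.subtype, bp.span_eq, Submodule.map_top, Submodule.range_subtype]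
    rw [hspan]
    exact (hcompl.symm.disjoint)
  set W : Submodule F V := span F (Set.range w)
  obtain ⟨Q, hQ⟩ := Submodule.exists_isCompl W
  have hrW : finrank F W = r := by
    rw [finrank_span_eq_card hwli, Fintype.card_fin]
  have hsQ : finrank F Q = s := by
    have := Submodule.finrank_add_eq_of_isCompl hQ
    rw [hrW, Module.finrank_pi, Fintype.card_fin] at this
    omega
  let bw : Basis (Fin r) F W := Basis.span hwli
  let bQ : Basis (Fin s) F Q := (finBasis F Q).reindex (finCongr hsQ)
  let B0' : Basis (Fin s ⊕ Fin r) F V :=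
    (bQ.prod bw).map (Submodule.prodEquivOfIsCompl Q W hQ.symm)
  have key : ∀ j : Fin s ⊕ Fin r, f (B0 j) = Sum.elim (fun _ => (0 : V)) (fun i => B0' (Sum.inr i)) j := by
    rintro (i | i)
    · have : (B0 (Sum.inl i)) = ((bK i : V)) := by
        simp [B0, Basis.prod_apply, Submodule.coe_prodEquivOfIsCompl]
      rw [this]
      simp only [Sum.elim_inl]
      simp only [LinearMap.mem_ker.mp (bK i).2]
    · have h1 : (B0 (Sum.inr i)) = ((bp i : V)) := by
        simp [B0, Basis.prod_apply, Submodule.coe_prodEquivOfIsCompl]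
      have h2 : (B0' (Sum.inr i)) = ((bw i : V)) := by
        simp [B0', Basis.prod_apply, Submodule.coe_prodEquivOfIsCompl]
      rw [h1, Sum.elim_inr, h2, Basis.span_apply]
  -- reindex
  let σ : (Fin s ⊕ Fin r) ≃ Fin n := finSumFinEquiv.trans (finCongr hsr)
  refine ⟨B0.reindex σ, B0'.reindex σ, Finset.univ.image (fun i : Fin r => σ (Sum.inr i)), ?_⟩
  intro j
  rw [Basis.reindex_apply, key]
  rcases h : σ.symm j with i | i
  · have hj : j ∉ Finset.univ.image (fun i : Fin r => σ (Sum.inr i)) := by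
      simp only [Finset.mem_image, Finset.mem_univ, true_and]
      rintro ⟨i', hi'⟩
      rw [← hi', Equiv.symm_apply_apply] at h
      cases h
    simp [hj]
  · have hj : j ∈ Finset.univ.image (fun i : Fin r => σ (Sum.inr i)) := by
      refine Finset.mem_image.2 ⟨i, Finset.mem_univ _, ?_⟩
      rw [← h, Equiv.apply_symm_apply]
    simp only [hj, if_true, Sum.elim_inr, Basis.reindex_apply, h]

lemma exists_rank_normal_form (c : Matrix (Fin n) (Fin n) F) :
    ∃ (u v : Matrix (Fin n) (Fin n) F) (S : Finset (Fin n)),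
      IsUnit u.det ∧ IsUnit v.det ∧
      u * c * v = Matrix.diagonal (fun i => if i ∈ S then (1:F) else 0) := by
  classical
  obtain ⟨B, B', S, hB⟩ := exists_adapted_bases (Matrix.toLin' c)
  set P := Pi.basisFun F (Fin n)
  have hu : Invertible (B'.toMatrix P) := B'.invertibleToMatrix P
  have hv : Invertible (P.toMatrix B) := P.invertibleToMatrix B
  refine ⟨B'.toMatrix P, P.toMatrix B, S,
    Matrix.isUnit_det_of_invertible _, Matrix.isUnit_det_of_invertible _, ?_⟩
  have hc : LinearMap.toMatrix P P (Matrix.toLin' c) = c := by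
    rw [LinearMap.toMatrix_eq_toMatrix', LinearMap.toMatrix'_toLin']
  rw [← hc, basis_toMatrix_mul_linearMap_toMatrix_mul_basis_toMatrix]
  ext i j
  rw [LinearMap.toMatrix_apply, hB]
  by_cases hj : j ∈ S
  · simp only [hj, if_true, Basis.repr_self, Matrix.diagonal_apply, Finsupp.single_apply]
    by_cases hij : i = j
    · subst hij; simp [hj]
    · simp [hij, Ne.symm hij]
  · simp only [hj, if_false, map_zero, Finsupp.coe_zero, Pi.zero_apply,
      Matrix.diagonal_apply]
    by_cases hij : i = j
    · subst hij; simp [hj]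
    · simp [hij]

end

section
variable {F : Type*} [Field F] {n : ℕ}

-- diagonal indicator matrix
noncomputable def eS (F : Type*) [Field F] {n : ℕ} (S : Finset (Fin n)) :
    Matrix (Fin n) (Fin n) F :=
  Matrix.diagonal (fun i => if i ∈ S then 1 else 0)

lemma eS_mul_eS (S : Finset (Fin n)) : eS F S * eS F S = eS F S := by
  rw [eS, diagonal_mul_diagonal]
  have : (fun i => (if i ∈ S then (1:F) else 0) * (if i ∈ S then 1 else 0))
      = fun i => if i ∈ S then (1:F) else 0 := by
    funext i; by_cases h : i ∈ S <;> simp [h]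
  rw [this]

lemma eS_transpose (S : Finset (Fin n)) : (eS F S)ᵀ = eS F S := diagonal_transpose _

lemma eS_mul_eS_of_disjoint {S T : Finset (Fin n)} (h : Disjoint S T) :
    eS F S * eS F T = 0 := by
  rw [eS, eS, diagonal_mul_diagonal]
  have : (fun i => (if i ∈ S then (1:F) else 0) * (if i ∈ T then 1 else 0)) = fun _ => 0 := by
    funext i
    by_cases hS : i ∈ S
    · have : i ∉ T := fun hT => (Finset.disjoint_left.mp h) hS hT
      simp [hS, this]
    · simp [hS]
  rw [this, diagonal_zero]

lemma stdBasisMatrix_eq_eS (k : Fin n) :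
    Matrix.single k k (1:F) = eS F {k} := by
  ext i j
  rw [eS, Matrix.single_apply, Matrix.diagonal_apply]
  simp only [of_apply, Finset.mem_singleton]
  by_cases hi : i = j
  · subst hi
    by_cases hk : k = i <;> simp [hk, eq_comm]
  · by_cases h1 : k = i <;> by_cases h2 : k = j <;> simp_all

lemma Jel_eq (k : Fin n) :
    Jel F k = fromBlocks (1 - eS F {k}) (eS F {k}) (-(eS F {k})) (1 - eS F {k}) := by
  rw [Jel, stdBasisMatrix_eq_eS]

end

section
variable {F : Type*} [Field F] {n : ℕ}

/-- The closure submonoid. -/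
noncomputable def spCl (F : Type*) [Field F] (n : ℕ) :
    Submonoid (Matrix (Fin n ⊕ Fin n) (Fin n ⊕ Fin n) F) :=
  Submonoid.closure (genH F n ∪ genN F n ∪ genJ F n)

lemma hmem {a : Matrix (Fin n) (Fin n) F} (ha : IsUnit a.det) :
    fromBlocks a 0 0 aᵀ⁻¹ ∈ spCl F n :=
  Submonoid.subset_closure (Or.inl (Or.inl ⟨a, ha, rfl⟩))

lemma nmem {b : Matrix (Fin n) (Fin n) F} (hb : bᵀ = b) :
    fromBlocks 1 b 0 1 ∈ spCl F n :=
  Submonoid.subset_closure (Or.inl (Or.inr ⟨b, hb, rfl⟩))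

lemma jmem (k : Fin n) : Jel F k ∈ spCl F n :=
  Submonoid.subset_closure (Or.inr ⟨k, rfl⟩)

/-- The partial Fourier element associated to a finset. -/
noncomputable def wS (F : Type*) [Field F] {n : ℕ} (S : Finset (Fin n)) :
    Matrix (Fin n ⊕ Fin n) (Fin n ⊕ Fin n) F :=
  fromBlocks (1 - eS F S) (eS F S) (-(eS F S)) (1 - eS F S)

lemma wS_mem (S : Finset (Fin n)) : wS F S ∈ spCl F n := by
  classical
  induction S using Finset.induction_on with
  | empty =>
      have : wS F (∅ : Finset (Fin n)) = 1 := by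
        rw [wS, eS]
        simp [← fromBlocks_one]
      rw [this]; exact one_mem _
  | @insert k S hk ih =>
      have hdisj : Disjoint ({k} : Finset (Fin n)) S := by simpa using hk
      have hde : eS F {k} * eS F S = 0 := eS_mul_eS_of_disjoint hdisj
      have hsum : eS F (insert k S) = eS F {k} + eS F S := by
        rw [eS, eS, eS, diagonal_add]
        have : (fun i => if i ∈ insert k S then (1:F) else 0)
            = fun i => (if i ∈ ({k}:Finset (Fin n)) then (1:F) else 0)
              + if i ∈ S then 1 else 0 := by
          funext i
          by_cases h1 : i = k
          · subst h1; simp [hk]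
          · by_cases h2 : i ∈ S <;> simp [h1, h2]
        rw [this]
      have key : Jel F k * wS F S = wS F (insert k S) := by
        rw [Jel_eq, wS, wS, fromBlocks_multiply, hsum]
        set d := eS F {k}
        set e := eS F S
        rw [fromBlocks_inj]
        refine ⟨by noncomm_ring, ?_, ?_, by noncomm_ring⟩
        · have h : (1-d)*e + d*(1-e) = d + e - (d*e + d*e) := by noncomm_ring
          rw [h, hde]; abel
        · have h : -d*(1:Matrix (Fin n) (Fin n) F) + (-(-d*e) + (1-d)*-e)
              = -(d+e) + (d*e + d*e) := by noncomm_ring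
          have h' : (-d)*(1-e) + (1-d)*(-e) = -(d+e) + (d*e + d*e) := by noncomm_ring
          rw [h', hde]; abel
      rw [← key]
      exact mul_mem (jmem k) ih

end

section
variable {F : Type*} [Field F] {n : ℕ}

/-- The symplectic condition. -/
def IsSymp (g : Matrix (Fin n ⊕ Fin n) (Fin n ⊕ Fin n) F) : Prop :=
  g * Jstd F n * gᵀ = Jstd F n

lemma isSymp_one : IsSymp (1 : Matrix (Fin n ⊕ Fin n) (Fin n ⊕ Fin n) F) := by
  simp [IsSymp]

lemma IsSymp.mul {g h : Matrix (Fin n ⊕ Fin n) (Fin n ⊕ Fin n) F}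
    (hg : IsSymp g) (hh : IsSymp h) : IsSymp (g * h) := by
  unfold IsSymp at *
  rw [transpose_mul, show g * h * Jstd F n * (hᵀ * gᵀ) = g * (h * Jstd F n * hᵀ) * gᵀ by
    noncomm_ring, hh, hg]

lemma isSymp_fromBlocks_iff {a b c d : Matrix (Fin n) (Fin n) F} :
    IsSymp (fromBlocks a b c d) ↔
      -(b * aᵀ) + a * bᵀ = 0 ∧ -(b * cᵀ) + a * dᵀ = 1 ∧
        -(d * aᵀ) + c * bᵀ = -1 ∧ -(d * cᵀ) + c * dᵀ = 0 := by
  rw [IsSymp, Jstd, fromBlocks_transpose, fromBlocks_multiply, fromBlocks_multiply]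
  simp only [mul_zero, zero_mul, mul_one, one_mul, mul_neg, neg_mul, zero_add, add_zero,
    mul_neg_one, neg_one_mul]
  rw [fromBlocks_inj]

lemma isSymp_H {a : Matrix (Fin n) (Fin n) F} (ha : IsUnit a.det) :
    IsSymp (fromBlocks a 0 0 aᵀ⁻¹) := by
  rw [isSymp_fromBlocks_iff]
  have h1 : a * (aᵀ⁻¹)ᵀ = 1 := by
    rw [transpose_nonsing_inv, transpose_transpose, mul_nonsing_inv _ ha]
  have h2 : aᵀ⁻¹ * aᵀ = 1 := nonsing_inv_mul _ (by rwa [det_transpose])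
  refine ⟨by simp, by simpa using h1, by simpa using h2, by simp⟩

lemma isSymp_N {b : Matrix (Fin n) (Fin n) F} (hb : bᵀ = b) :
    IsSymp (fromBlocks 1 b 0 1 : Matrix (Fin n ⊕ Fin n) (Fin n ⊕ Fin n) F) := by
  rw [isSymp_fromBlocks_iff]
  refine ⟨by rw [hb]; simp, by simp, by simp, by simp⟩

lemma isSymp_blocks_e {e : Matrix (Fin n) (Fin n) F} (he : e * e = e) (het : eᵀ = e) :
    IsSymp (fromBlocks (1 - e) e (-e) (1 - e)) ∧
      IsSymp (fromBlocks (1 - e) (-e) e (1 - e)) := by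
  constructor
  · rw [isSymp_fromBlocks_iff]
    simp only [transpose_sub, transpose_one, transpose_neg, het]
    refine ⟨by noncomm_ring, ?_, ?_, by noncomm_ring⟩
    · have h : -(e * -e) + (1-e) * (1-e) = 1 + (e*e + e*e) - (e + e) := by noncomm_ring
      rw [h, he]; abel
    · have h : -((1-e) * (1-e)) + -e * e = -1 - (e*e + e*e) + (e + e) := by noncomm_ring
      rw [h, he]; abel
  · rw [isSymp_fromBlocks_iff]
    simp only [transpose_sub, transpose_one, transpose_neg, het]
    refine ⟨by noncomm_ring, ?_, ?_, by noncomm_ring⟩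
    · have h : -(-e * e) + (1-e) * (1-e) = 1 + (e*e + e*e) - (e + e) := by noncomm_ring
      rw [h, he]; abel
    · have h : -((1-e) * (1-e)) + e * -e = -1 - (e*e + e*e) + (e + e) := by noncomm_ring
      rw [h, he]; abel

end

section
variable {F : Type*} [Field F] {n : ℕ}

lemma JJ : Jstd F n * Jstd F n = -1 := by
  rw [Jstd, fromBlocks_multiply, ← fromBlocks_one, fromBlocks_neg]
  rw [fromBlocks_inj]
  refine ⟨by simp, by simp, by simp, by simp⟩

lemma IsSymp.transpose_rel {g : Matrix (Fin n ⊕ Fin n) (Fin n ⊕ Fin n) F}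
    (hg : IsSymp g) : gᵀ * Jstd F n * g = Jstd F n := by
  set J := Jstd F n with hJ
  have h1 : g * (-(J * gᵀ * J)) = 1 := by
    have e1 : g * (-(J * gᵀ * J)) = -(g * J * gᵀ * J) := by noncomm_ring
    have e2 : g * J * gᵀ * J = J * J := by rw [hg]
    rw [e1, e2, JJ]; simp
  have h2 : (-(J * gᵀ * J)) * g = 1 := mul_eq_one_comm.mp h1
  have h3 : J * (gᵀ * J * g) = J * J := by
    have e1 : J * (gᵀ * J * g) = -((-(J * gᵀ * J)) * g) := by noncomm_ring
    rw [e1, h2]; rw [JJ]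
  have hJu : IsUnit J := by
    have hr : J * (-J) = 1 := by rw [mul_neg, JJ]; simp
    have hl : (-J) * J = 1 := by rw [neg_mul, JJ]; simp
    exact ⟨⟨J, -J, hr, hl⟩, rfl⟩
  exact hJu.mul_left_cancel (by rw [h3])

lemma isSymp_col_rel {a b c d : Matrix (Fin n) (Fin n) F}
    (hg : IsSymp (fromBlocks a b c d)) :
    aᵀ * c = cᵀ * a ∧ aᵀ * d - cᵀ * b = 1 ∧ bᵀ * d = dᵀ * b := by
  have h := hg.transpose_rel
  rw [Jstd, fromBlocks_transpose, fromBlocks_multiply, fromBlocks_multiply] at h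
  simp only [mul_zero, zero_mul, mul_one, one_mul, mul_neg, neg_mul, zero_add, add_zero,
    mul_neg_one, neg_one_mul] at h
  rw [fromBlocks_inj] at h
  obtain ⟨h1, h2, h3, h4⟩ := h
  refine ⟨?_, ?_, ?_⟩
  · have : aᵀ * c - cᵀ * a = 0 := by rw [← h1]; noncomm_ring
    linear_combination (norm := noncomm_ring) this
  · rw [← h2]; noncomm_ring
  · have : bᵀ * d - dᵀ * b = 0 := by rw [← h4]; noncomm_ring
    linear_combination (norm := noncomm_ring) this

lemma mem_of_lower_left_zero {a b d : Matrix (Fin n) (Fin n) F}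
    (hg : IsSymp (fromBlocks a b 0 d)) : fromBlocks a b 0 d ∈ spCl F n := by
  obtain ⟨h1, h2, h3⟩ := isSymp_col_rel hg
  have had : aᵀ * d = 1 := by
    rw [transpose_zero, zero_mul, sub_zero] at h2; exact h2
  have haunit : IsUnit a.det := by
    have h := congrArg Matrix.det had
    rw [det_mul, det_transpose, det_one] at h
    exact IsUnit.of_mul_eq_one _ h
  have hd : d = aᵀ⁻¹ := (inv_eq_right_inv had).symm
  have hdT : dᵀ = a⁻¹ := by rw [hd, ← transpose_nonsing_inv, transpose_transpose]
  have hb : (a⁻¹ * b)ᵀ = a⁻¹ * b := by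
    rw [transpose_mul, transpose_nonsing_inv, ← hd, h3, hdT]
  have hfact : fromBlocks a b 0 d = fromBlocks a 0 0 aᵀ⁻¹ * fromBlocks 1 (a⁻¹ * b) 0 1 := by
    rw [fromBlocks_multiply, fromBlocks_inj]
    refine ⟨by simp, ?_, by simp, by simp [hd]⟩
    rw [← mul_assoc, mul_nonsing_inv _ haunit, one_mul, zero_mul, add_zero]
  rw [hfact]
  exact mul_mem (hmem haunit) (nmem hb)

end

section
variable {F : Type*} [Field F] {n : ℕ}

lemma mem_of_lower_left_eS {a b d : Matrix (Fin n) (Fin n) F} (S : Finset (Fin n))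
    (hg : IsSymp (fromBlocks a b (eS F S) d)) :
    fromBlocks a b (eS F S) d ∈ spCl F n := by
  classical
  have he : eS F S * eS F S = eS F S := eS_mul_eS S
  have het : (eS F S)ᵀ = eS F S := eS_transpose S
  set e := eS F S with hedef
  obtain ⟨h1, h2, h3⟩ := isSymp_col_rel hg
  have hae : aᵀ * e = e * a := by rw [h1, het]
  set b₀ : Matrix (Fin n) (Fin n) F := -(e * a) with hb0
  have hb₀sym : b₀ᵀ = b₀ := by rw [hb0, transpose_neg, transpose_mul, het, hae]
  have heae : e * a * e = e * a := by
    calc e * a * e = aᵀ * e * e := by rw [hae]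
    _ = aᵀ * e := by rw [mul_assoc, he]
    _ = e * a := hae
  have hwinv : wS F S * fromBlocks (1-e) (-e) e (1-e) = 1 := by
    rw [wS, ← hedef, fromBlocks_multiply, ← fromBlocks_one, fromBlocks_inj]
    refine ⟨?_, ?_, ?_, ?_⟩
    · have hx : (1-e)*(1-e) + e*e = 1 - (e + e) + (e*e + e*e) := by noncomm_ring
      rw [hx, he]; abel
    · noncomm_ring
    · noncomm_ring
    · have hx : -e*(-e) + (1-e)*(1-e) = 1 - (e + e) + (e*e + e*e) := by noncomm_ring
      rw [hx, he]; abel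
  set g3 := fromBlocks (1-e) (-e) e (1-e) * (fromBlocks 1 b₀ 0 1 * fromBlocks a b e d)
    with hg3
  have hg3symp : IsSymp g3 :=
    ((isSymp_blocks_e he het).2).mul ((isSymp_N hb₀sym).mul hg)
  have hg3eq : g3 = fromBlocks ((1-e)*(a + b₀*e) - e*e) ((1-e)*(b + b₀*d) - e*d)
      0 (e*(b + b₀*d) + (1-e)*d) := by
    rw [hg3, fromBlocks_multiply, fromBlocks_multiply]
    simp only [one_mul, zero_mul, mul_zero, mul_one, add_zero, zero_add]
    rw [fromBlocks_inj]
    refine ⟨by noncomm_ring, by noncomm_ring, ?_, by noncomm_ring⟩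
    have hx : e*(a + b₀*e) + (1-e)*e = (e*a - (e*e)*(a*e)) + (e - e*e) := by
      rw [hb0]; noncomm_ring
    rw [hx, he, ← mul_assoc, heae]
    abel
  have hg3mem : g3 ∈ spCl F n := by
    rw [hg3eq] at hg3symp ⊢
    exact mem_of_lower_left_zero hg3symp
  have hNN : fromBlocks 1 (-b₀) 0 1 * fromBlocks 1 b₀ 0 1
      = (1 : Matrix (Fin n ⊕ Fin n) (Fin n ⊕ Fin n) F) := by
    rw [fromBlocks_multiply, ← fromBlocks_one, fromBlocks_inj]
    refine ⟨by noncomm_ring, by noncomm_ring, by noncomm_ring, by noncomm_ring⟩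
  have hfinal : fromBlocks 1 (-b₀) 0 1 * (wS F S * g3) = fromBlocks a b e d := by
    rw [hg3, show wS F S * (fromBlocks (1-e) (-e) e (1-e) *
        (fromBlocks 1 b₀ 0 1 * fromBlocks a b e d))
      = (wS F S * fromBlocks (1-e) (-e) e (1-e)) *
        (fromBlocks 1 b₀ 0 1 * fromBlocks a b e d) by noncomm_ring, hwinv, one_mul,
      ← mul_assoc, hNN, one_mul]
  rw [← hfinal]
  refine mul_mem (nmem ?_) (mul_mem (wS_mem S) hg3mem)
  rw [transpose_neg, hb₀sym]

end


/-- the symplectic group `Sp(2n,F)` (matrices with `g J gᵀ = J`)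
is generated by the subgroup `H`, the subgroup `N₊`, and the elements `J_k`. -/
theorem sp_generated {F : Type*} [Field F] (n : ℕ) :
    {g : Matrix (Fin n ⊕ Fin n) (Fin n ⊕ Fin n) F |
        g * Jstd F n * g.transpose = Jstd F n}
      = (Submonoid.closure (genH F n ∪ genN F n ∪ genJ F n) :
          Set (Matrix (Fin n ⊕ Fin n) (Fin n ⊕ Fin n) F)) := by
  ext g
  constructor
  · intro hg
    have hg' : IsSymp g := hg
    set a := g.toBlocks₁₁ with ha
    set b := g.toBlocks₁₂ with hb
    set c := g.toBlocks₂₁ with hc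
    set d := g.toBlocks₂₂ with hd
    have hgb : g = fromBlocks a b c d := (fromBlocks_toBlocks g).symm
    obtain ⟨u, v, S, hu, hv, huv⟩ := _root_.exists_rank_normal_form c
    have huv' : u * c * v = eS F S := huv
    set p := uᵀ⁻¹ with hp
    have hput : IsUnit uᵀ.det := by rwa [det_transpose]
    have hpunit : IsUnit p.det := isUnit_nonsing_inv_det _ hput
    have hpT : pᵀ⁻¹ = u := by
      rw [hp, transpose_nonsing_inv, transpose_transpose, nonsing_inv_nonsing_inv _ hu]
    have hg'' : IsSymp (fromBlocks p 0 0 pᵀ⁻¹ * g * fromBlocks v 0 0 vᵀ⁻¹) :=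
      ((isSymp_H hpunit).mul hg').mul (isSymp_H hv)
    have hblocks : fromBlocks p 0 0 pᵀ⁻¹ * g * fromBlocks v 0 0 vᵀ⁻¹
        = fromBlocks (p*a*v) (p*b*vᵀ⁻¹) (eS F S) (pᵀ⁻¹*d*vᵀ⁻¹) := by
      rw [hgb, fromBlocks_multiply, fromBlocks_multiply, fromBlocks_inj]
      refine ⟨by noncomm_ring, by noncomm_ring, ?_, by noncomm_ring⟩
      rw [hpT, ← huv']
      noncomm_ring
    rw [hblocks] at hg''
    have hmid : fromBlocks (p*a*v) (p*b*vᵀ⁻¹) (eS F S) (pᵀ⁻¹*d*vᵀ⁻¹) ∈ spCl F n :=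
      mem_of_lower_left_eS S hg''
    have hpiu : IsUnit p⁻¹.det := isUnit_nonsing_inv_det _ hpunit
    have hviu : IsUnit v⁻¹.det := isUnit_nonsing_inv_det _ hv
    have hPinv : fromBlocks p⁻¹ 0 0 (p⁻¹)ᵀ⁻¹ * fromBlocks p 0 0 pᵀ⁻¹
        = (1 : Matrix (Fin n ⊕ Fin n) (Fin n ⊕ Fin n) F) := by
      rw [fromBlocks_multiply, ← fromBlocks_one, fromBlocks_inj]
      refine ⟨by simp [nonsing_inv_mul _ hpunit], by simp, by simp, ?_⟩
      rw [transpose_nonsing_inv, nonsing_inv_nonsing_inv _ (by rwa [det_transpose])]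
      simp [mul_nonsing_inv _ (show IsUnit pᵀ.det by rwa [det_transpose])]
    have hVinv : fromBlocks v 0 0 vᵀ⁻¹ * fromBlocks v⁻¹ 0 0 (v⁻¹)ᵀ⁻¹
        = (1 : Matrix (Fin n ⊕ Fin n) (Fin n ⊕ Fin n) F) := by
      rw [fromBlocks_multiply, ← fromBlocks_one, fromBlocks_inj]
      refine ⟨by simp [mul_nonsing_inv _ hv], by simp, by simp, ?_⟩
      rw [transpose_nonsing_inv, nonsing_inv_nonsing_inv _ (by rwa [det_transpose])]
      simp [nonsing_inv_mul _ (show IsUnit vᵀ.det by rwa [det_transpose])]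
    have hfac : g = fromBlocks p⁻¹ 0 0 (p⁻¹)ᵀ⁻¹ *
        (fromBlocks (p*a*v) (p*b*vᵀ⁻¹) (eS F S) (pᵀ⁻¹*d*vᵀ⁻¹)) *
          fromBlocks v⁻¹ 0 0 (v⁻¹)ᵀ⁻¹ := by
      rw [← hblocks, show fromBlocks p⁻¹ 0 0 (p⁻¹)ᵀ⁻¹ *
          (fromBlocks p 0 0 pᵀ⁻¹ * g * fromBlocks v 0 0 vᵀ⁻¹) * fromBlocks v⁻¹ 0 0 (v⁻¹)ᵀ⁻¹
        = (fromBlocks p⁻¹ 0 0 (p⁻¹)ᵀ⁻¹ * fromBlocks p 0 0 pᵀ⁻¹) * g *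
            (fromBlocks v 0 0 vᵀ⁻¹ * fromBlocks v⁻¹ 0 0 (v⁻¹)ᵀ⁻¹) by noncomm_ring,
        hPinv, hVinv, one_mul, mul_one]
    show g ∈ spCl F n
    rw [hfac]
    exact mul_mem (mul_mem (hmem hpiu) hmid) (hmem hviu)
  · intro hg
    have hg' : g ∈ spCl F n := hg
    show IsSymp g
    refine Submonoid.closure_induction ?_ isSymp_one
      (fun x y _ _ hx hy => hx.mul hy) hg'
    rintro x ((⟨a, ha, rfl⟩ | ⟨b', hb', rfl⟩) | ⟨k, rfl⟩)
    · exact isSymp_H ha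
    · exact isSymp_N hb'
    · rw [Jel_eq]
      exact (isSymp_blocks_e (eS_mul_eS {k}) (eS_transpose {k})).1
end

section
/- Let X be a finite-dimensional vector space over a finite field F of odd characteristic, P a quadratic form on X, and Exp a nontrivial additive character of F. Define f(u) = Σ_{x ∈ X} Exp(P(x) + ⟨u, x⟩) for u in the dual space U = X*. Then there exist a subspace K ⊆ U, a nonzero constant c ∈ ℂ, and a quadratic form S on U such that f(u) = c · Exp(S(u)) for u ∈ K and f(u) = 0 for u ∉ K. -/
/-- for a quadratic form `P` on a finite-dimensional vector space `X`
over a finite field of odd characteristic and a nontrivial additive character `Exp`,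
the Gauss sum `f(u) = Σ_x Exp(P(x) + ⟨u,x⟩)` on the dual space `U = X*` is, for a
suitable subspace `K ⊆ U`, a nonzero constant `c` and a quadratic form `S` on `U`,
equal to `c·Exp(S(u))` on `K` and to `0` off `K`. -/
theorem gauss_sum_dual {F : Type*} [Field F] [Fintype F] (hp : ringChar F ≠ 2)
    (Exp : AddChar F ℂ) (hExp : Exp ≠ 1)
    {X : Type*} [AddCommGroup X] [Module F X] [FiniteDimensional F X] [Fintype X]
    (P : QuadraticForm F X) :
    ∃ (K : Submodule F (Module.Dual F X)) (c : ℂ) (_ : c ≠ 0)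
      (S : QuadraticForm F (Module.Dual F X)),
      ∀ u : Module.Dual F X,
        (u ∈ K → ∑ x : X, Exp (P x + u x) = c * Exp (S u)) ∧
        (u ∉ K → ∑ x : X, Exp (P x + u x) = 0) := by
  classical
  have h2 : (2 : F) ≠ 0 := Ring.two_ne_zero hp
  set B : X →ₗ[F] Module.Dual F X := P.polarBilin with hBdef
  -- sums of nontrivial additive characters vanish
  have hsum : ∀ φ : Module.Dual F X, φ ≠ 0 → ∑ x : X, Exp (φ x) = 0 := by
    intro φ hφ
    have hne : (Exp.compAddMonoidHom φ.toAddMonoidHom) ≠ 0 := by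
      rw [AddChar.ne_zero_iff]
      obtain ⟨a, ha⟩ := AddChar.ne_one_iff.mp hExp
      obtain ⟨x₀, hx₀⟩ : ∃ x, φ x ≠ 0 := by
        by_contra h; push_neg at h; exact hφ (LinearMap.ext fun x => h x)
      refine ⟨(a / φ x₀) • x₀, ?_⟩
      simpa [map_smul, smul_eq_mul, div_mul_cancel₀ _ hx₀] using ha
    simpa using AddChar.sum_eq_zero_iff_ne_zero.mpr hne
  -- P vanishes on the radical
  have hPker : ∀ z : X, B z = 0 → P z = 0 := by
    intro z hz
    have h1 : QuadraticMap.polar P z z = 2 * P z := by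
      rw [QuadraticMap.polar_self, two_nsmul]; ring
    have h0 : QuadraticMap.polar P z z = 0 := by
      have hzz : (B z) z = 0 := by rw [hz]; rfl
      simpa [hBdef, QuadraticMap.polarBilin_apply_apply] using hzz
    have h3 : 2 * P z = 0 := h1 ▸ h0
    rcases mul_eq_zero.mp h3 with h | h
    · exact absurd h h2
    · exact h
  -- translation identity
  have key : ∀ (u : Module.Dual F X) (y : X),
      ∑ x : X, Exp (P x + (u + B y) x) = Exp (-(P y + u y)) * ∑ x : X, Exp (P x + u x) := by
    intro u y
    rw [Finset.mul_sum]
    refine Fintype.sum_equiv (Equiv.addRight y) _ _ (fun x => ?_)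
    rw [← AddChar.map_add_eq_mul]
    congr 1
    have hq : P (x + y) = P x + P y + QuadraticMap.polar (⇑P) x y :=
      QuadraticMap.map_add (⇑P) x y
    have hby : (B y) x = QuadraticMap.polar (⇑P) x y := by
      simp [hBdef, QuadraticMap.polarBilin_apply_apply,
        QuadraticMap.polar_comm (⇑P) x y]
    simp only [Equiv.coe_addRight, LinearMap.add_apply, map_add, hq, hby]
    ring
  -- the constant c = f(0) is nonzero
  have e1 : ∀ y : X, ∑ x : X, Exp (P x + -(P y)) = ∑ x : X, Exp (P x + (B x) y) := by
    intro y
    refine (Fintype.sum_equiv (Equiv.addRight y) _ _ (fun z => ?_)).symm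
    congr 1
    have hq : P (z + y) = P z + P y + QuadraticMap.polar (⇑P) z y :=
      QuadraticMap.map_add (⇑P) z y
    have hbz : (B z) y = QuadraticMap.polar (⇑P) z y := by
      simp [hBdef, QuadraticMap.polarBilin_apply_apply]
    simp only [Equiv.coe_addRight, hq, hbz]
    ring
  have hprod : (∑ x : X, Exp (P x)) * (∑ y : X, Exp (-(P y))) =
      ∑ x : X, (if B x = 0 then (Fintype.card X : ℂ) else 0) := by
    rw [Finset.sum_mul_sum, Finset.sum_comm]
    have step1 : ∀ y : X, ∑ x : X, Exp (P x) * Exp (-(P y)) = ∑ x : X, Exp (P x + (B x) y) := by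
      intro y
      rw [← e1 y]
      exact Finset.sum_congr rfl fun x _ => (AddChar.map_add_eq_mul Exp _ _).symm
    calc ∑ y : X, ∑ x : X, Exp (P x) * Exp (-(P y))
        = ∑ y : X, ∑ x : X, Exp (P x + (B x) y) := Finset.sum_congr rfl fun y _ => step1 y
      _ = ∑ x : X, ∑ y : X, Exp (P x + (B x) y) := Finset.sum_comm
      _ = ∑ x : X, (if B x = 0 then (Fintype.card X : ℂ) else 0) := by
          refine Finset.sum_congr rfl fun x _ => ?_
          by_cases hx : B x = 0
          · simp [hx, hPker x hx, Finset.card_univ]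
          · rw [if_neg hx]
            have hinner : ∑ y : X, Exp (P x + (B x) y)
                = Exp (P x) * ∑ y : X, Exp ((B x) y) := by
              rw [Finset.mul_sum]
              exact Finset.sum_congr rfl fun y _ => AddChar.map_add_eq_mul Exp _ _
            rw [hinner, hsum _ hx, mul_zero]
  have hitesum : (∑ x : X, (if B x = 0 then (Fintype.card X : ℂ) else 0)) ≠ 0 := by
    rw [← Finset.sum_filter, Finset.sum_const, nsmul_eq_mul]
    have hmem : (0 : X) ∈ Finset.univ.filter (fun x => B x = 0) := by
      simp
    refine mul_ne_zero ?_ ?_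
    · exact_mod_cast Finset.card_ne_zero_of_mem hmem
    · exact_mod_cast Fintype.card_ne_zero
  have hc : (∑ x : X, Exp (P x)) ≠ 0 := by
    intro h
    exact hitesum (by rw [← hprod, h, zero_mul])
  -- a linear section of B on its range
  haveI : Module.Projective F ↥(LinearMap.range B) :=
    Module.Projective.of_basis (Module.Basis.ofVectorSpace F ↥(LinearMap.range B))
  obtain ⟨σ, hσ⟩ := B.rangeRestrict.exists_rightInverse_of_surjective B.range_rangeRestrict
  obtain ⟨K', hK'⟩ := Submodule.exists_isCompl (LinearMap.range B)
  set s : Module.Dual F X →ₗ[F] X :=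
    σ ∘ₗ (LinearMap.range B).linearProjOfIsCompl K' hK' with hsdef
  have hs : ∀ u, u ∈ LinearMap.range B → B (s u) = u := by
    intro u hu
    have h1 : (LinearMap.range B).linearProjOfIsCompl K' hK' u = ⟨u, hu⟩ :=
      Submodule.linearProjOfIsCompl_apply_left hK' ⟨u, hu⟩
    have hcomp : B.rangeRestrict (σ ⟨u, hu⟩) = ⟨u, hu⟩ := LinearMap.ext_iff.mp hσ ⟨u, hu⟩
    have h3 : B (σ ⟨u, hu⟩) = u := congrArg Subtype.val hcomp
    simp [hsdef, h1, h3]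
  refine ⟨LinearMap.range B, ∑ x : X, Exp (P x), hc, -(P.comp s), fun u => ⟨?_, ?_⟩⟩
  · -- on K
    intro hu
    have hk := key 0 (s u)
    simp only [zero_add, hs u hu, LinearMap.zero_apply, add_zero] at hk
    have hS : ((-(P.comp s)) u) = -(P (s u)) := by
      simp [QuadraticMap.neg_apply, QuadraticMap.comp_apply]
    rw [hk, hS, mul_comm]
  · -- off K
    intro hu
    have hann : u ∉ (LinearMap.ker B).dualAnnihilator := by
      intro hmem
      rw [← LinearMap.range_dualMap_eq_dualAnnihilator_ker B] at hmem
      obtain ⟨φ, hφ⟩ := hmem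
      apply hu
      refine ⟨(Module.evalEquiv F X).symm φ, ?_⟩
      set y := (Module.evalEquiv F X).symm φ with hy
      apply LinearMap.ext; intro x
      have hφy : φ = Module.Dual.eval F X y := by
        rw [hy, ← Module.evalEquiv_apply, LinearEquiv.apply_symm_apply]
      have hx : (B.dualMap φ) x = u x := by rw [hφ]
      rw [LinearMap.dualMap_apply, hφy, Module.Dual.eval_apply] at hx
      rw [← hx]
      simp [hBdef, QuadraticMap.polarBilin_apply_apply,
        QuadraticMap.polar_comm (⇑P) y x]
    rw [Submodule.mem_dualAnnihilator] at hann
    push_neg at hann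
    obtain ⟨r, hrker, hur⟩ := hann
    have hBr : B r = 0 := LinearMap.mem_ker.mp hrker
    obtain ⟨a, ha⟩ := AddChar.ne_one_iff.mp hExp
    set t := (a / u r) • r with ht
    have hBt : B t = 0 := by rw [ht, map_smul, hBr, smul_zero]
    have hut : u t = a := by
      rw [ht, map_smul, smul_eq_mul, div_mul_cancel₀ _ hur]
    have hk := key u t
    simp only [hBt, add_zero, hPker t hBt, zero_add, hut] at hk
    have hz : (1 - Exp (-a)) * ∑ x : X, Exp (P x + u x) = 0 := by
      linear_combination hk
    have hEa : (1 : ℂ) - Exp (-a) ≠ 0 := by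
      rw [sub_ne_zero]
      intro h
      have h1 : Exp (-a) * Exp a = 1 := by
        rw [← AddChar.map_add_eq_mul, neg_add_cancel, AddChar.map_zero_eq_one]
      rw [← h, one_mul] at h1
      exact ha h1
    rcases mul_eq_zero.mp hz with h | h
    · exact absurd h hEa
    · exact h
end

section
/- Let X be a finite-dimensional F-vector space and Y an F-vector space (finite-dimensional), F a finite field of odd characteristic, Q a quadratic form on X × Y, and Exp a nontrivial additive character of F. Then F(y) := Σ_{x ∈ X} Exp(Q(x,y)) satisfies: there exist a linear subspace Z ⊆ Y of codimension at most dim X, a nonzero constant c ∈ ℂ, and a quadratic form R on Y such that F(y) = c·Exp(R(y)) for y ∈ Z and F(y) = 0 for y ∉ Z. -/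
open Module LinearMap

section Aux

variable {F : Type*} [Field F] [Fintype F]

/-- Composing a nontrivial additive character with a linear functional. -/
noncomputable def expComp (Exp : AddChar F ℂ) {X : Type*} [AddCommGroup X] [Module F X]
    (f : X →ₗ[F] F) : AddChar X ℂ where
  toFun x := Exp (f x)
  map_zero_eq_one' := by simp
  map_add_eq_mul' x y := by simp [AddChar.map_add_eq_mul]

lemma expComp_apply (Exp : AddChar F ℂ) {X : Type*} [AddCommGroup X] [Module F X]
    (f : X →ₗ[F] F) (x : X) : expComp Exp f x = Exp (f x) := rfl

lemma expComp_ne_one (Exp : AddChar F ℂ) (hExp : Exp ≠ 1) {X : Type*} [AddCommGroup X]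
    [Module F X] {f : X →ₗ[F] F} (hf : f ≠ 0) : expComp Exp f ≠ 1 := by
  obtain ⟨a, ha⟩ := AddChar.ne_one_iff.mp hExp
  obtain ⟨x, hx⟩ : ∃ x, f x ≠ 0 := by
    by_contra h
    push_neg at h
    exact hf (LinearMap.ext fun x => by simp [h])
  rw [AddChar.ne_one_iff]
  refine ⟨((f x)⁻¹ * a) • x, ?_⟩
  rw [expComp_apply, map_smul, smul_eq_mul]
  rw [show (f x)⁻¹ * a * f x = a by field_simp]
  exact ha

lemma sum_expComp (Exp : AddChar F ℂ) (hExp : Exp ≠ 1) {X : Type*} [AddCommGroup X]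
    [Module F X] [Fintype X] {f : X →ₗ[F] F} (hf : f ≠ 0) : ∑ x : X, Exp (f x) = 0 := by
  have := AddChar.sum_eq_zero_of_ne_one (expComp_ne_one Exp hExp hf)
  simpa [expComp_apply] using this

end Aux

/-- for a quadratic form `Q` on `X × Y` (with `X`, `Y`
finite-dimensional over a finite field of odd characteristic) and a nontrivial
additive character `Exp`, the partial Gauss sum `F(y) = Σ_{x ∈ X} Exp(Q(x,y))`
equals `c·Exp(R(y))` on a subspace `Z ⊆ Y` of codimension at most `dim X`, and
vanishes off `Z`, for a suitable nonzero constant `c` and quadratic form `R` on `Y`. -/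
theorem gauss_partial_sum {F : Type*} [Field F] [Fintype F] (hp : ringChar F ≠ 2)
    (Exp : AddChar F ℂ) (hExp : Exp ≠ 1)
    {X Y : Type*} [AddCommGroup X] [Module F X] [FiniteDimensional F X] [Fintype X]
    [AddCommGroup Y] [Module F Y] [FiniteDimensional F Y]
    (Q : QuadraticForm F (X × Y)) :
    ∃ (Z : Submodule F Y) (c : ℂ) (_ : c ≠ 0) (R : QuadraticForm F Y),
      Module.finrank F (Y ⧸ Z) ≤ Module.finrank F X ∧
      ∀ y : Y,
        (y ∈ Z → ∑ x : X, Exp (Q (x, y)) = c * Exp (R y)) ∧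
        (y ∉ Z → ∑ x : X, Exp (Q (x, y)) = 0) := by
  classical
  -- basic pieces
  set Q₁ : QuadraticForm F X := Q.comp (LinearMap.inl F X Y) with hQ₁def
  set Q₂ : QuadraticForm F Y := Q.comp (LinearMap.inr F X Y) with hQ₂def
  set ℓ : Y →ₗ[F] Module.Dual F X :=
    ((Q.polarBilin.compl₁₂ (LinearMap.inl F X Y) (LinearMap.inr F X Y))).flip with hℓdef
  set B₁ : LinearMap.BilinForm F X := Q₁.polarBilin with hB₁def
  have hℓ : ∀ (y : Y) (x : X), ℓ y x = QuadraticMap.polar Q (x, 0) (0, y) := fun y x => rfl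
  have hB₁ : ∀ x x' : X, B₁ x x' = QuadraticMap.polar Q₁ x x' := fun x x' => rfl
  have hB₁symm : ∀ x x' : X, B₁ x x' = B₁ x' x := fun x x' =>
    QuadraticMap.polar_comm Q₁ x x'
  -- decomposition of Q
  have expand : ∀ (x : X) (y : Y), Q (x, y) = Q₁ x + Q₂ y + ℓ y x := by
    intro x y
    have : (x, y) = ((x, (0 : Y)) + ((0 : X), y)) := by simp
    rw [this]
    have hpol : QuadraticMap.polar Q (x, 0) (0, y)
        = Q ((x, 0) + (0, y)) - Q (x, 0) - Q (0, y) := rfl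
    have : Q ((x, (0:Y)) + ((0:X), y))
        = Q (x, 0) + Q (0, y) + QuadraticMap.polar Q (x, 0) (0, y) := by
      rw [hpol]; ring
    rw [this, hℓ]
    simp only [hQ₁def, hQ₂def, QuadraticMap.comp_apply, LinearMap.inl_apply, LinearMap.inr_apply]
  -- the radical
  set rad : Submodule F X := LinearMap.ker B₁ with hraddef
  have two_ne : (2 : F) ≠ 0 := Ring.two_ne_zero hp
  have hQ₁rad : ∀ h ∈ rad, Q₁ h = 0 := by
    intro h hh
    have h1 : B₁ h h = 0 := by
      rw [hraddef, LinearMap.mem_ker] at hh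
      rw [hh]; rfl
    have h2 : QuadraticMap.polar Q₁ h h = 2 * Q₁ h := by
      have : Q₁ (h + h) = Q₁ ((2 : F) • h) := by rw [two_smul]
      rw [QuadraticMap.polar, this, QuadraticMap.map_smul]
      simp only [smul_eq_mul]
      ring
    have h3 : (2 : F) * Q₁ h = 0 := by rw [← h2, ← hB₁, h1]
    exact (mul_eq_zero.mp h3).resolve_left two_ne
  have hB₁rad : ∀ (x : X), ∀ h ∈ rad, B₁ x h = 0 := by
    intro x h hh
    rw [hB₁symm]
    rw [hraddef, LinearMap.mem_ker] at hh
    rw [hh]; rfl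
  -- the constant c
  set c : ℂ := ∑ x : X, Exp (Q₁ x) with hcdef
  -- nonvanishing of c
  have hc : c ≠ 0 := by
    have key : c * (∑ x : X, Exp (-(Q₁ x)))
        = ∑ h : X, (if h ∈ rad then (Fintype.card X : ℂ) else 0) := by
      rw [hcdef, Finset.sum_mul_sum]
      have swap : ∀ x' : X, ∑ x : X, Exp (Q₁ x) * Exp (-(Q₁ x'))
          = ∑ h : X, Exp (Q₁ (x' + h)) * Exp (-(Q₁ x')) := by
        intro x'
        exact (Equiv.sum_comp (Equiv.addLeft x') (fun x => Exp (Q₁ x) * Exp (-(Q₁ x')))).symm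
      calc ∑ x : X, ∑ x' : X, Exp (Q₁ x) * Exp (-(Q₁ x'))
          = ∑ x' : X, ∑ x : X, Exp (Q₁ x) * Exp (-(Q₁ x')) := Finset.sum_comm
        _ = ∑ x' : X, ∑ h : X, Exp (Q₁ (x' + h)) * Exp (-(Q₁ x')) := by
            exact Finset.sum_congr rfl fun x' _ => swap x'
        _ = ∑ h : X, ∑ x' : X, Exp (Q₁ h) * Exp (B₁.flip h x') := by
            rw [Finset.sum_comm]
            refine Finset.sum_congr rfl fun h _ => Finset.sum_congr rfl fun x' _ => ?_
            have hq : Q₁ (x' + h) = Q₁ x' + Q₁ h + B₁ x' h := by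
              rw [hB₁, QuadraticMap.polar]; ring
            rw [hq, ← AddChar.map_add_eq_mul, ← AddChar.map_add_eq_mul]
            congr 1
            have : B₁.flip h x' = B₁ x' h := rfl
            rw [this]; ring
        _ = ∑ h : X, (if h ∈ rad then (Fintype.card X : ℂ) else 0) := by
            refine Finset.sum_congr rfl fun h _ => ?_
            rw [← Finset.mul_sum]
            by_cases hh : h ∈ rad
            · simp only [hh, if_true]
              have hflip : B₁.flip h = 0 := by
                ext x; exact hB₁rad x h hh
              rw [hQ₁rad h hh, AddChar.map_zero_eq_one, one_mul, hflip]
              simp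
            · simp only [hh, if_false]
              have hflip : B₁.flip h ≠ 0 := by
                intro h0
                apply hh
                rw [hraddef, LinearMap.mem_ker]
                ext x
                have hx : B₁.flip h x = 0 := by rw [h0]; rfl
                have hx' : (B₁ x) h = 0 := hx
                simpa [hB₁symm h x] using hx'
              rw [sum_expComp Exp hExp hflip, mul_zero]
    intro h0
    rw [h0, zero_mul] at key
    have heq : (0 : ℂ) = ∑ h : X, (if h ∈ rad then (Fintype.card X : ℂ) else 0) := key
    rw [← Finset.sum_filter] at heq
    simp only [Finset.sum_const, nsmul_eq_mul] at heq
    have hcard : (Finset.univ.filter (· ∈ rad)).card ≠ 0 := by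
      rw [Finset.card_ne_zero]
      exact ⟨0, by simp [Submodule.zero_mem]⟩
    have hX : (Fintype.card X : ℂ) ≠ 0 := Nat.cast_ne_zero.mpr Fintype.card_ne_zero
    exact (mul_ne_zero (Nat.cast_ne_zero.mpr hcard) hX) heq.symm
  -- duality: range B₁ = dualAnnihilator rad
  have hrange : LinearMap.range B₁ = rad.dualAnnihilator := by
    have hle : LinearMap.range B₁ ≤ rad.dualAnnihilator := by
      rintro f ⟨x, rfl⟩
      rw [Submodule.mem_dualAnnihilator]
      intro h hh
      exact hB₁rad x h hh
    refine Submodule.eq_of_le_of_finrank_le hle ?_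
    have h1 : finrank F (LinearMap.range B₁) + finrank F rad = finrank F X :=
      LinearMap.finrank_range_add_finrank_ker B₁
    have h2 : finrank F (X ⧸ rad) + finrank F rad = finrank F X :=
      Submodule.finrank_quotient_add_finrank rad
    have h3 : finrank F rad.dualAnnihilator = finrank F (X ⧸ rad) :=
      (LinearEquiv.finrank_eq (Subspace.quotEquivAnnihilator rad)).symm
    rw [h3]; omega
  -- the linear section
  obtain ⟨W, hW⟩ := rad.exists_isCompl
  set e : W →ₗ[F] Module.Dual F X := B₁ ∘ₗ W.subtype with hedef
  have he : Function.Injective e := by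
    rw [← LinearMap.ker_eq_bot, LinearMap.ker_eq_bot']
    intro w hw
    have hwrad : (w : X) ∈ rad := by
      rw [hraddef, LinearMap.mem_ker]
      exact hw
    have : (w : X) ∈ rad ⊓ W := ⟨hwrad, w.2⟩
    rw [hW.inf_eq_bot] at this
    exact Subtype.ext this
  have hrangee : LinearMap.range e = LinearMap.range B₁ := by
    apply le_antisymm
    · rintro f ⟨w, rfl⟩
      exact ⟨(w : X), rfl⟩
    · rintro f ⟨x, rfl⟩
      have hx : x ∈ rad ⊔ W := by rw [hW.sup_eq_top]; trivial
      obtain ⟨r, hr, w, hw, rfl⟩ := Submodule.mem_sup.mp hx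
      refine ⟨⟨w, hw⟩, ?_⟩
      have hr0 : B₁ r = 0 := hr
      rw [hedef, LinearMap.comp_apply, map_add, hr0, zero_add]
      rfl
  set eqv : W ≃ₗ[F] LinearMap.range B₁ :=
    (LinearEquiv.ofInjective e he).trans (LinearEquiv.ofEq _ _ hrangee) with heqvdef
  have heqv : ∀ w : W, (eqv w : Module.Dual F X) = e w := fun w => rfl
  set g : LinearMap.range B₁ →ₗ[F] X := W.subtype ∘ₗ (eqv.symm : _ →ₗ[F] W) with hgdef
  have hgB : ∀ w : LinearMap.range B₁, B₁ (g w) = (w : Module.Dual F X) := by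
    intro w
    have h1 : eqv (eqv.symm w) = w := eqv.apply_symm_apply w
    have h2 : (eqv (eqv.symm w) : Module.Dual F X) = e (eqv.symm w) := heqv _
    rw [h1] at h2
    rw [hgdef]
    exact h2.symm
  -- the subspace Z
  set ρ : Y →ₗ[F] Module.Dual F rad := (rad.subtype.dualMap).comp ℓ with hρdef
  set Z : Submodule F Y := LinearMap.ker ρ with hZdef
  have hZmem : ∀ y : Y, y ∈ Z ↔ ∀ h : rad, ℓ y (h : X) = 0 := by
    intro y
    rw [hZdef, LinearMap.mem_ker]
    constructor
    · intro h0 h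
      have := congrArg (fun f => f h) h0
      exact this
    · intro hh
      ext h
      exact hh h
  have hZrange : ∀ y ∈ Z, ℓ y ∈ LinearMap.range B₁ := by
    intro y hy
    rw [hrange, Submodule.mem_dualAnnihilator]
    intro h hh
    exact (hZmem y).mp hy ⟨h, hh⟩
  -- codimension bound
  have hcodim : finrank F (Y ⧸ Z) ≤ finrank F X := by
    have h1 : finrank F (Y ⧸ Z) = finrank F (LinearMap.range ρ) :=
      LinearEquiv.finrank_eq (ρ.quotKerEquivRange)
    have h2 : finrank F (LinearMap.range ρ) ≤ finrank F (Module.Dual F rad) :=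
      (LinearMap.range ρ).finrank_le
    have h3 : finrank F (Module.Dual F rad) = finrank F rad :=
      Subspace.dual_finrank_eq
    have h4 : finrank F rad ≤ finrank F X := rad.finrank_le
    omega
  -- the linear x₀
  obtain ⟨Z', hZ'⟩ := Z.exists_isCompl
  set π : Y →ₗ[F] Z := Submodule.linearProjOfIsCompl Z Z' hZ' with hπdef
  set ℓZ : Z →ₗ[F] LinearMap.range B₁ :=
    LinearMap.codRestrict (LinearMap.range B₁) (ℓ.comp Z.subtype)
      (fun z => hZrange z z.2) with hℓZdef
  set x₀ : Y →ₗ[F] X := g.comp (ℓZ.comp π) with hx₀def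
  have hx₀ : ∀ y ∈ Z, ∀ x : X, B₁ x (x₀ y) = ℓ y x := by
    intro y hy x
    have hπy : π y = ⟨y, hy⟩ := Submodule.linearProjOfIsCompl_apply_left hZ' ⟨y, hy⟩
    have : B₁ (x₀ y) = ℓ y := by
      rw [hx₀def]
      simp only [LinearMap.comp_apply, hπy]
      rw [hgB (ℓZ ⟨y, hy⟩)]
      rfl
    rw [hB₁symm, this]
  -- the quadratic form R
  set M : LinearMap.BilinForm F Y := ℓ.compl₂ x₀ with hMdef
  set R : QuadraticForm F Y := Q₂ + Q₁.comp x₀ - M.toQuadraticMap with hRdef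
  have hR : ∀ y : Y, R y = Q₂ y + Q₁ (x₀ y) - ℓ y (x₀ y) := by
    intro y
    rw [hRdef]
    simp only [QuadraticMap.sub_apply, QuadraticMap.add_apply, QuadraticMap.comp_apply,
      LinearMap.BilinMap.toQuadraticMap_apply, hMdef, LinearMap.compl₂_apply]
  refine ⟨Z, c, hc, R, hcodim, fun y => ⟨?_, ?_⟩⟩
  · -- y ∈ Z
    intro hy
    have step1 : ∑ x : X, Exp (Q (x, y))
        = ∑ x : X, Exp (Q (x - x₀ y, y)) :=
      (Equiv.sum_comp (Equiv.subRight (x₀ y)) (fun x => Exp (Q (x, y)))).symm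
    rw [step1]
    have step2 : ∀ x : X, Exp (Q (x - x₀ y, y)) = Exp (Q₁ x) * Exp (R y) := by
      intro x
      have hqsub : Q₁ (x - x₀ y) = Q₁ x + Q₁ (x₀ y) - ℓ y x := by
        have e1 : Q₁ (x + -(x₀ y)) = Q₁ x + Q₁ (-(x₀ y)) + QuadraticMap.polar Q₁ x (-(x₀ y)) := by
          rw [QuadraticMap.polar]; ring
        have e2 : QuadraticMap.polar Q₁ x (-(x₀ y)) = -QuadraticMap.polar Q₁ x (x₀ y) :=
          QuadraticMap.polar_neg_right Q₁ x (x₀ y)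
        have e3 : QuadraticMap.polar Q₁ x (x₀ y) = ℓ y x := by
          rw [← hB₁]; exact hx₀ y hy x
        rw [sub_eq_add_neg, e1, e2, e3, QuadraticMap.map_neg]
        ring
      rw [expand, hqsub, map_sub]
      rw [show Q₁ x + Q₁ (x₀ y) - ℓ y x + Q₂ y + (ℓ y x - ℓ y (x₀ y))
          = Q₁ x + (Q₂ y + Q₁ (x₀ y) - ℓ y (x₀ y)) by ring]
      rw [AddChar.map_add_eq_mul, hR]
    rw [Finset.sum_congr rfl (fun x _ => step2 x), ← Finset.sum_mul, hcdef]
  · -- y ∉ Z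
    intro hy
    obtain ⟨h0, hh0⟩ : ∃ h : rad, ℓ y (h : X) ≠ 0 := by
      by_contra h
      push_neg at h
      exact hy ((hZmem y).mpr h)
    obtain ⟨a, ha⟩ := AddChar.ne_one_iff.mp hExp
    set h : X := ((ℓ y (h0 : X))⁻¹ * a) • (h0 : X) with hhdef
    have hhrad : h ∈ rad := rad.smul_mem _ h0.2
    have hℓh : ℓ y h = a := by
      have hv : ℓ y h = ((ℓ y (h0 : X))⁻¹ * a) * (ℓ y (h0 : X)) := by
        rw [hhdef, map_smul, smul_eq_mul]
      rw [hv, mul_comm, ← mul_assoc, mul_inv_cancel₀ hh0, one_mul]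
    set S : ℂ := ∑ x : X, Exp (Q (x, y)) with hSdef
    have hshift : S = Exp a * S := by
      have e0 : S = ∑ x : X, Exp (Q (x + h, y)) :=
        (Equiv.sum_comp (Equiv.addRight h) (fun x => Exp (Q (x, y)))).symm
      have e1 : ∀ x : X, Q (x + h, y) = Q (x, y) + a := by
        intro x
        rw [expand, expand]
        have hq : Q₁ (x + h) = Q₁ x := by
          have : Q₁ (x + h) = Q₁ x + Q₁ h + QuadraticMap.polar Q₁ x h := by
            rw [QuadraticMap.polar]; ring
          rw [this, hQ₁rad h hhrad, ← hB₁, hB₁rad x h hhrad]; ring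
        rw [hq, map_add, hℓh]; ring
      calc S = ∑ x : X, Exp (Q (x + h, y)) := e0
        _ = ∑ x : X, Exp (Q (x, y)) * Exp a :=
            Finset.sum_congr rfl fun x _ => by rw [e1 x, AddChar.map_add_eq_mul]
        _ = Exp a * S := by rw [← Finset.sum_mul]; exact mul_comm _ _
    have : (1 - Exp a) * S = 0 := by rw [sub_mul, one_mul, ← hshift, sub_self]
    rcases mul_eq_zero.mp this with h1 | h2
    · exact absurd (by linear_combination -h1 : Exp a = 1) ha
    · exact h2
end

section
/- Let F be a finite field of odd characteristic and Exp a nontrivial additive character. For finite index sets, let G(H;Q) : ℓ²(F^m) → ℓ²(F^n) be the Gaussian operator (G(H;Q)f)(x) = Σ_{y : (y,x) ∈ H} Exp(Q(x,y)) f(y), where H ⊆ F^m ⊕ F^n is a linear subspace and Q a quadratic form on H. Then the composition of two Gaussian operators G(K;R) ∘ G(H;Q) is, up to a nonzero complex scalar factor, again a Gaussian operator. -/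
section gaussAux

open Finset QuadraticMap

variable {F : Type*} [Field F] {Exp : AddChar F ℂ}
variable {V : Type*} [AddCommGroup V] [Module F V] [Fintype V]

omit [Fintype V] in
lemma exists_linear_section {A B : Type*} [AddCommGroup A]
    [Module F A] [AddCommGroup B] [Module F B] (u : A →ₗ[F] B) :
    ∃ s : B →ₗ[F] A, ∀ b ∈ LinearMap.range u, u (s b) = b := by
  obtain ⟨g, hg⟩ := (LinearMap.range u).subtype.exists_leftInverse_of_injective
    (Submodule.ker_subtype _)
  obtain ⟨g', hg'⟩ := u.rangeRestrict.exists_rightInverse_of_surjective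
    (LinearMap.range_eq_top.mpr (LinearMap.surjective_rangeRestrict u))
  refine ⟨g'.comp g, fun b hb => ?_⟩
  have h1 : g b = ⟨b, hb⟩ := by
    have := LinearMap.congr_fun hg ⟨b, hb⟩
    simpa using this
  have h2 : u (g' ⟨b, hb⟩) = b := by
    have := LinearMap.congr_fun hg' ⟨b, hb⟩
    have := congrArg Subtype.val this
    simpa using this
  simp [LinearMap.comp_apply, h1, h2]

lemma sum_exp_linear (hExp : Exp ≠ 1) (g : V →ₗ[F] F) (hg : g ≠ 0) :
    ∑ y : V, Exp (g y) = 0 := by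
  obtain ⟨a, ha⟩ := AddChar.ne_one_iff.mp hExp
  obtain ⟨y₁, hy₁⟩ : ∃ y, g y ≠ 0 := by
    by_contra h; push_neg at h; exact hg (LinearMap.ext fun y => h y)
  set y₀ := ((g y₁)⁻¹ * a) • y₁ with hy₀
  have hgy₀ : g y₀ = a := by
    rw [hy₀, LinearMap.map_smul, smul_eq_mul]; field_simp
  have h2 : Exp a * ∑ y : V, Exp (g y) = ∑ y : V, Exp (g y) := by
    rw [Finset.mul_sum]
    exact Fintype.sum_equiv (Equiv.addLeft y₀) _ _ (fun y => by
      rw [← hgy₀, ← AddChar.map_add_eq_mul, ← map_add]; rfl)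
  have h3 : (Exp a - 1) * ∑ y : V, Exp (g y) = 0 := by
    rw [sub_mul, one_mul, h2, sub_self]
  rcases mul_eq_zero.mp h3 with h | h
  · exact absurd (sub_eq_zero.mp h) ha
  · exact h

open scoped Classical in
lemma sum_exp_quad_mul (hExp : Exp ≠ 1) (q : QuadraticMap F V F) (ℓ : V →ₗ[F] F) :
    (∑ y : V, Exp (q y + ℓ y)) * (∑ y : V, Exp (- q y)) =
      (Fintype.card V : ℂ) *
        ∑ u : V, (if q.polarBilin u + ℓ = 0 then Exp (q u + ℓ u) else 0) := by
  classical
  rw [Finset.sum_mul_sum, Finset.sum_comm]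
  have step : ∀ y : V, (∑ y' : V, Exp (q y' + ℓ y') * Exp (- q y)) =
      ∑ u : V, Exp (q u + ℓ u) * Exp ((q.polarBilin u + ℓ) y) := by
    intro y
    refine (Fintype.sum_equiv (Equiv.addLeft y) _ _ (fun u => ?_)).symm
    rw [← AddChar.map_add_eq_mul, ← AddChar.map_add_eq_mul]
    show Exp _ = Exp _
    congr 1
    simp only [Equiv.coe_addLeft, LinearMap.add_apply, polarBilin_apply_apply,
      QuadraticMap.polar, map_add, smul_eq_mul]
    ring_nf
    rw [add_comm u y]
    ring
  simp only [step]
  rw [Finset.sum_comm, Finset.mul_sum]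
  refine Finset.sum_congr rfl fun u _ => ?_
  rw [← Finset.mul_sum]
  by_cases h : q.polarBilin u + ℓ = 0
  · rw [if_pos h, h]
    simp only [LinearMap.zero_apply, AddChar.map_zero_eq_one]
    rw [Finset.sum_const, Finset.card_univ, nsmul_eq_mul, mul_one, mul_comm]
  · rw [if_neg h, sum_exp_linear hExp _ h, mul_zero, mul_zero]

omit [Fintype V] in
lemma quad_eq_zero_of_polar (hp : ringChar F ≠ 2) (q : QuadraticMap F V F) {u : V}
    (h : q.polarBilin u = 0) : q u = 0 := by
  have h1 : QuadraticMap.polar q u u = 0 := by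
    have := LinearMap.congr_fun h u
    simpa [polarBilin_apply_apply] using this
  have h2 : q (u + u) = q u + q u + QuadraticMap.polar q u u := by
    simp [QuadraticMap.polar]
  have h3 : q ((2 : F) • u) = (2 * 2 : F) • q u := QuadraticMap.map_smul q 2 u
  rw [two_smul F u, h2, h1, add_zero, smul_eq_mul] at h3
  have h5 : (2 : F) ≠ 0 := Ring.two_ne_zero hp
  have h6 : (2 : F) * q u = 0 := by linear_combination - h3
  rcases mul_eq_zero.mp h6 with h | h
  · exact absurd h h5
  · exact h

lemma sum_exp_quad_ne_zero (hExp : Exp ≠ 1) (hp : ringChar F ≠ 2)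
    (q : QuadraticMap F V F) :
    (∑ y : V, Exp (q y)) ≠ 0 ∧ (∑ y : V, Exp (- q y)) ≠ 0 := by
  classical
  have h := sum_exp_quad_mul hExp q 0
  simp only [add_zero, LinearMap.zero_apply] at h
  have h2 : ∑ u : V, (if q.polarBilin u = 0 then Exp (q u) else 0)
      = ((Finset.univ.filter (fun u : V => q.polarBilin u = 0)).card : ℂ) := by
    rw [← Finset.sum_boole]
    refine Finset.sum_congr rfl fun u _ => ?_
    by_cases hu : q.polarBilin u = 0
    · rw [if_pos hu, if_pos hu, quad_eq_zero_of_polar hp q hu, AddChar.map_zero_eq_one]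
    · rw [if_neg hu, if_neg hu]
  rw [h2] at h
  have hcard : ((Finset.univ.filter (fun u : V => q.polarBilin u = 0)).card : ℂ) ≠ 0 := by
    have : (0 : V) ∈ Finset.univ.filter (fun u : V => q.polarBilin u = 0) := by
      simp [map_zero]
    simp only [ne_eq, Nat.cast_eq_zero]
    exact Finset.card_ne_zero_of_mem this
  have hV : ((Fintype.card V : ℂ)) ≠ 0 := by
    simp [Fintype.card_ne_zero]
  have hprod : (∑ y : V, Exp (q y)) * (∑ y : V, Exp (- q y)) ≠ 0 := by
    rw [h]; exact mul_ne_zero hV hcard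
  exact ⟨fun h0 => hprod (by rw [h0, zero_mul]), fun h0 => hprod (by rw [h0, mul_zero])⟩

lemma sum_exp_quad_linear_eq_zero (hExp : Exp ≠ 1) (hp : ringChar F ≠ 2)
    (q : QuadraticMap F V F) (ℓ : V →ₗ[F] F)
    (h : ∀ u : V, q.polarBilin u + ℓ ≠ 0) :
    ∑ y : V, Exp (q y + ℓ y) = 0 := by
  classical
  have hk := sum_exp_quad_mul hExp q ℓ
  simp only [h, if_false] at hk
  rw [Finset.sum_const_zero, mul_zero] at hk
  rcases mul_eq_zero.mp hk with h0 | h0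
  · exact h0
  · exact absurd h0 (sum_exp_quad_ne_zero hExp hp q).2

lemma sum_exp_quad_shift (q : QuadraticMap F V F) (v : V) :
    ∑ y : V, Exp (q y + q.polarBilin v y) = Exp (- q v) * ∑ y : V, Exp (q y) := by
  rw [Finset.mul_sum]
  refine Fintype.sum_equiv (Equiv.addRight v) _ _ (fun y => ?_)
  rw [← AddChar.map_add_eq_mul]
  show Exp _ = Exp _
  congr 1
  simp only [Equiv.coe_addRight, polarBilin_apply_apply, QuadraticMap.polar]
  rw [add_comm v y]
  ring

end gaussAux

open scoped Classical in
/-- The Gaussian operator `G(H;Q) : ℓ²(Fᵐ) → ℓ²(Fⁿ)`: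
`(G(H;Q)f)(x) = Σ_{y : (y,x) ∈ H} Exp(Q(x,y)) f(y)`. -/
noncomputable def gaussOp {F : Type*} [Field F] [Fintype F] {m n : ℕ}
    (Exp : AddChar F ℂ)
    (H : Submodule F ((Fin m → F) × (Fin n → F)))
    (Q : QuadraticForm F ((Fin n → F) × (Fin m → F)))
    (f : (Fin m → F) → ℂ) : (Fin n → F) → ℂ :=
  fun x => ∑ y : Fin m → F, if (y, x) ∈ H then Exp (Q (x, y)) * f y else 0

/-- the composition of two Gaussian operators is, up to a nonzero
complex scalar factor, again a Gaussian operator. -/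
theorem gaussOp_comp {F : Type*} [Field F] [Fintype F] (hp : ringChar F ≠ 2)
    (Exp : AddChar F ℂ) (hExp : Exp ≠ 1) {m n k : ℕ}
    (H : Submodule F ((Fin m → F) × (Fin n → F)))
    (Q : QuadraticForm F ((Fin n → F) × (Fin m → F)))
    (K : Submodule F ((Fin n → F) × (Fin k → F)))
    (R : QuadraticForm F ((Fin k → F) × (Fin n → F))) :
    ∃ (c : ℂ) (_ : c ≠ 0)
      (M : Submodule F ((Fin m → F) × (Fin k → F)))
      (S : QuadraticForm F ((Fin k → F) × (Fin m → F))),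
      ∀ f : (Fin m → F) → ℂ,
        gaussOp Exp K R (gaussOp Exp H Q f) = fun x => c * gaussOp Exp M S f x := by
  classical
  -- the big product space
  set p : ((Fin m → F) × (Fin n → F) × (Fin k → F)) →ₗ[F] (Fin m → F) × (Fin k → F) :=
    (LinearMap.fst F (Fin m → F) ((Fin n → F) × (Fin k → F))).prod
      ((LinearMap.snd F (Fin n → F) (Fin k → F)).comp
        (LinearMap.snd F (Fin m → F) ((Fin n → F) × (Fin k → F)))) with hp_def
  set j : (Fin n → F) →ₗ[F] ((Fin m → F) × (Fin n → F) × (Fin k → F)) :=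
    LinearMap.prod 0 (LinearMap.prod LinearMap.id 0) with hj_def
  have hj : ∀ y, j y = (0, y, 0) := fun _ => rfl
  set N : Submodule F ((Fin m → F) × (Fin n → F) × (Fin k → F)) :=
    (H.comap ((LinearMap.fst F (Fin m → F) ((Fin n → F) × (Fin k → F))).prod
        ((LinearMap.fst F (Fin n → F) (Fin k → F)).comp
          (LinearMap.snd F (Fin m → F) ((Fin n → F) × (Fin k → F)))))) ⊓
      (K.comap (LinearMap.snd F (Fin m → F) ((Fin n → F) × (Fin k → F)))) with hN_def
  have hNmem : ∀ w : (Fin m → F) × (Fin n → F) × (Fin k → F),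
      w ∈ N ↔ (w.1, w.2.1) ∈ H ∧ (w.2.1, w.2.2) ∈ K := by
    intro w
    simp [hN_def, Submodule.mem_inf, Submodule.mem_comap]
  set φ : QuadraticForm F ((Fin m → F) × (Fin n → F) × (Fin k → F)) :=
    Q.comp (((LinearMap.fst F (Fin n → F) (Fin k → F)).comp
        (LinearMap.snd F (Fin m → F) ((Fin n → F) × (Fin k → F)))).prod
        (LinearMap.fst F (Fin m → F) ((Fin n → F) × (Fin k → F)))) +
    R.comp (((LinearMap.snd F (Fin n → F) (Fin k → F)).comp
        (LinearMap.snd F (Fin m → F) ((Fin n → F) × (Fin k → F)))).prod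
        ((LinearMap.fst F (Fin n → F) (Fin k → F)).comp
        (LinearMap.snd F (Fin m → F) ((Fin n → F) × (Fin k → F))))) with hφ_def
  have hφ : ∀ w : (Fin m → F) × (Fin n → F) × (Fin k → F),
      φ w = Q (w.2.1, w.1) + R (w.2.2, w.2.1) := by
    intro w
    simp [hφ_def, QuadraticMap.add_apply, QuadraticMap.comp_apply]
  set L : Submodule F (Fin n → F) := N.comap j with hL_def
  set qL : QuadraticForm F ↥L := φ.comp (j.comp L.subtype) with hqL_def
  obtain ⟨s, hs⟩ := exists_linear_section (p.comp N.subtype)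
  set M : Submodule F ((Fin m → F) × (Fin k → F)) :=
    LinearMap.range (p.comp N.subtype) with hM_def
  set sf : ((Fin m → F) × (Fin k → F)) →ₗ[F] ((Fin m → F) × (Fin n → F) × (Fin k → F)) :=
    N.subtype.comp s with hsf_def
  have hsfN : ∀ w, sf w ∈ N := fun w => (s w).2
  have hsfp : ∀ w ∈ M, p (sf w) = w := fun w hw => hs w hw
  set Λ : ((Fin m → F) × (Fin k → F)) →ₗ[F] (↥L →ₗ[F] F) :=
    (φ.polarBilin.compl₂ (j.comp L.subtype)).comp sf with hΛ_def
  have hΛ : ∀ w y, Λ w y = QuadraticMap.polar φ (sf w) (j ↑y) := by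
    intro w y
    simp [hΛ_def, LinearMap.compl₂_apply, QuadraticMap.polarBilin_apply_apply]
  obtain ⟨t, ht⟩ := exists_linear_section (qL.polarBilin)
  set vmap : ((Fin m → F) × (Fin k → F)) →ₗ[F] ↥L := t.comp Λ with hvmap_def
  set M' : Submodule F ((Fin m → F) × (Fin k → F)) :=
    M ⊓ (LinearMap.range qL.polarBilin).comap Λ with hM'_def
  set sw : ((Fin k → F) × (Fin m → F)) →ₗ[F] ((Fin m → F) × (Fin k → F)) :=
    (LinearMap.snd F (Fin k → F) (Fin m → F)).prod
      (LinearMap.fst F (Fin k → F) (Fin m → F)) with hsw_def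
  set S : QuadraticForm F ((Fin k → F) × (Fin m → F)) :=
    φ.comp (sf.comp sw) - qL.comp (vmap.comp sw) with hS_def
  refine ⟨∑ y : ↥L, Exp (qL y), (sum_exp_quad_ne_zero hExp hp qL).1, M', S, ?_⟩
  intro f
  funext z
  have core : ∀ x : Fin m → F,
      (∑ y : Fin n → F, if (x, (y, z)) ∈ N then Exp (φ (x, (y, z))) else 0)
        = (∑ y : ↥L, Exp (qL y)) * (if (x, z) ∈ M' then Exp (S (z, x)) else 0) := by
    intro x
    by_cases hw : (x, z) ∈ M
    · -- the fiber is a coset of L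
      have hu0N : sf (x, z) ∈ N := hsfN _
      have hpu : p (sf (x, z)) = (x, z) := hsfp _ hw
      have hu1 : (sf (x, z)).1 = x := by
        have := congrArg Prod.fst hpu
        simpa [hp_def] using this
      have hu3 : (sf (x, z)).2.2 = z := by
        have := congrArg Prod.snd hpu
        simpa [hp_def] using this
      have hadd : ∀ y : Fin n → F,
          (x, ((sf (x, z)).2.1 + y, z)) = sf (x, z) + j y := by
        intro y
        rw [hj]
        show _ = ((sf (x, z)).1 + 0, ((sf (x, z)).2.1 + y, (sf (x, z)).2.2 + 0))
        rw [add_zero, add_zero, hu1, hu3]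
      have step1 : (∑ y : Fin n → F, if (x, (y, z)) ∈ N then Exp (φ (x, (y, z))) else 0)
          = ∑ y : Fin n → F, if y ∈ L then Exp (φ (sf (x, z) + j y)) else 0 := by
        refine (Fintype.sum_equiv (Equiv.addLeft ((sf (x, z)).2.1)) _ _ (fun y => ?_)).symm
        have he : (Equiv.addLeft ((sf (x, z)).2.1)) y = (sf (x, z)).2.1 + y := rfl
        rw [he, hadd y]
        have hmem : (sf (x, z) + j y ∈ N) ↔ y ∈ L :=
          (Submodule.add_mem_iff_right _ hu0N).trans (Submodule.mem_comap).symm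
        by_cases hy : y ∈ L
        · rw [if_pos hy, if_pos (hmem.mpr hy)]
        · rw [if_neg hy, if_neg (fun h => hy (hmem.mp h))]
      have step2 : (∑ y : Fin n → F, if y ∈ L then Exp (φ (sf (x, z) + j y)) else 0)
          = ∑ y : ↥L, Exp (φ (sf (x, z) + j ↑y)) := by
        rw [← Finset.sum_filter]
        exact Finset.sum_subtype _ (by simp) _
      have expand : ∀ y : ↥L, Exp (φ (sf (x, z) + j ↑y))
          = Exp (φ (sf (x, z))) * Exp (qL y + Λ (x, z) y) := by
        intro y
        rw [← AddChar.map_add_eq_mul]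
        congr 1
        have hqLy : qL y = φ (j ↑y) := by
          simp [hqL_def, QuadraticMap.comp_apply]
        rw [hΛ, hqLy]
        simp only [QuadraticMap.polar]
        ring
      have step3 : (∑ y : Fin n → F, if (x, (y, z)) ∈ N then Exp (φ (x, (y, z))) else 0)
          = Exp (φ (sf (x, z))) * ∑ y : ↥L, Exp (qL y + Λ (x, z) y) := by
        rw [step1, step2]
        simp only [expand]
        rw [← Finset.mul_sum]
      rw [step3]
      by_cases hw' : Λ (x, z) ∈ LinearMap.range qL.polarBilin
      · have hM'mem : (x, z) ∈ M' := Submodule.mem_inf.mpr ⟨hw, hw'⟩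
        rw [if_pos hM'mem]
        have hv : qL.polarBilin (vmap (x, z)) = Λ (x, z) := by
          simpa [hvmap_def] using ht _ hw'
        have inner : ∑ y : ↥L, Exp (qL y + Λ (x, z) y)
            = Exp (- qL (vmap (x, z))) * ∑ y : ↥L, Exp (qL y) := by
          rw [← hv]
          exact sum_exp_quad_shift qL (vmap (x, z))
        have hswzx : sw (z, x) = (x, z) := rfl
        have hSval : S (z, x) = φ (sf (x, z)) - qL (vmap (x, z)) := by
          rw [hS_def]
          simp [QuadraticMap.sub_apply, QuadraticMap.comp_apply, hswzx]
        rw [inner, hSval, sub_eq_add_neg, AddChar.map_add_eq_mul]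
        ring
      · have hM'mem : (x, z) ∉ M' := fun h => hw' (Submodule.mem_inf.mp h).2
        rw [if_neg hM'mem, mul_zero]
        have inner : ∑ y : ↥L, Exp (qL y + Λ (x, z) y) = 0 := by
          refine sum_exp_quad_linear_eq_zero hExp hp qL (Λ (x, z)) (fun u hu => hw' ?_)
          refine ⟨-u, ?_⟩
          rw [map_neg]
          exact (eq_neg_of_add_eq_zero_right hu).symm
        rw [inner, mul_zero]
    · have hM'mem : (x, z) ∉ M' := fun h => hw (Submodule.mem_inf.mp h).1
      rw [if_neg hM'mem, mul_zero]
      refine Finset.sum_eq_zero fun y _ => ?_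
      refine if_neg (fun h => hw ?_)
      exact ⟨⟨(x, (y, z)), h⟩, rfl⟩
  have lhs_eq : gaussOp Exp K R (gaussOp Exp H Q f) z
      = ∑ x : Fin m → F,
          (∑ y : Fin n → F, if (x, (y, z)) ∈ N then Exp (φ (x, (y, z))) else 0) * f x := by
    have e1 : ∀ y : Fin n → F,
        (if (y, z) ∈ K then Exp (R (z, y)) *
            (∑ x : Fin m → F, if (x, y) ∈ H then Exp (Q (y, x)) * f x else 0) else 0)
          = ∑ x : Fin m → F, (if (x, (y, z)) ∈ N then Exp (φ (x, (y, z))) else 0) * f x := by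
      intro y
      by_cases hK : (y, z) ∈ K
      · rw [if_pos hK, Finset.mul_sum]
        refine Finset.sum_congr rfl fun x _ => ?_
        by_cases hH : (x, y) ∈ H
        · rw [if_pos hH, if_pos ((hNmem _).mpr ⟨hH, hK⟩), hφ]
          rw [AddChar.map_add_eq_mul]
          ring
        · rw [if_neg hH, if_neg (fun h => hH ((hNmem _).mp h).1)]
          simp
      · rw [if_neg hK]
        symm
        refine Finset.sum_eq_zero fun x _ => ?_
        rw [if_neg (fun h => hK ((hNmem _).mp h).2), zero_mul]
    show (∑ y : Fin n → F, if (y, z) ∈ K then Exp (R (z, y)) *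
        (∑ x : Fin m → F, if (x, y) ∈ H then Exp (Q (y, x)) * f x else 0) else 0) = _
    rw [Finset.sum_congr rfl (fun y _ => e1 y), Finset.sum_comm]
    exact Finset.sum_congr rfl fun x _ => (Finset.sum_mul _ _ _).symm
  rw [lhs_eq]
  show _ = (∑ y : ↥L, Exp (qL y)) *
      ∑ x : Fin m → F, if (x, z) ∈ M' then Exp (S (z, x)) * f x else 0
  rw [Finset.mul_sum]
  refine Finset.sum_congr rfl fun x _ => ?_
  rw [core x]
  by_cases hx : (x, z) ∈ M'
  · rw [if_pos hx, if_pos hx]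
    ring
  · rw [if_neg hx, if_neg hx, mul_zero, zero_mul]
end

section
/- Let X and Y be coisotropic subspaces of a finite-dimensional symplectic space (V, ω). In the symplectic quotient X/X^⊥, let K be the image of X ∩ Y and L the image of X ∩ Y^⊥ (both are subspaces of X containing their intersection with X^⊥). Then L is the orthogonal complement of K in X/X^⊥ with respect to the induced symplectic form. -/
/-- Orthogonal complement of a subspace with respect to a bilinear form. -/
def sympOrth {F : Type*} [Field F] {V : Type*} [AddCommGroup V] [Module F V]
    (ω : V →ₗ[F] V →ₗ[F] F) (W : Submodule F V) : Submodule F V where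
  carrier := {v | ∀ w ∈ W, ω v w = 0}
  zero_mem' := by intro w hw; simp
  add_mem' := by
    intro a b ha hb w hw
    simp [map_add, LinearMap.add_apply, ha w hw, hb w hw]
  smul_mem' := by
    intro c a ha w hw
    simp [map_smul, LinearMap.smul_apply, ha w hw]


section aux
variable {F : Type*} [Field F] {V : Type*} [AddCommGroup V] [Module F V]
    (ω : V →ₗ[F] V →ₗ[F] F)

lemma skew_of_alt (halt : ∀ v, ω v v = 0) (x y : V) : ω x y = - ω y x := by
  have h := halt (x + y)
  simp only [map_add, LinearMap.add_apply, halt] at h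
  linear_combination h

lemma refl_of_alt (halt : ∀ v, ω v v = 0) : (ω : LinearMap.BilinForm F V).IsRefl := by
  intro x y h
  rw [skew_of_alt ω halt, h, neg_zero]

lemma sympOrth_eq_orthogonal (halt : ∀ v, ω v v = 0) (W : Submodule F V) :
    sympOrth ω W = LinearMap.BilinForm.orthogonal ω W := by
  ext v
  constructor
  · intro h w hw
    exact refl_of_alt ω halt _ _ (h w hw)
  · intro h w hw
    exact refl_of_alt ω halt _ _ (h w hw)

lemma sympOrth_sup (A B : Submodule F V) :
    sympOrth ω (A ⊔ B) = sympOrth ω A ⊓ sympOrth ω B := by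
  ext v
  constructor
  · intro h
    exact ⟨fun a ha => h a (Submodule.mem_sup_left ha),
      fun b hb => h b (Submodule.mem_sup_right hb)⟩
  · rintro ⟨h1, h2⟩ w hw
    rcases Submodule.mem_sup.1 hw with ⟨a, ha, b, hb, rfl⟩
    rw [map_add, h1 a ha, h2 b hb, add_zero]

lemma sympOrth_sympOrth [FiniteDimensional F V] (halt : ∀ v, ω v v = 0)
    (hnd : ∀ v, (∀ w, ω v w = 0) → v = 0) (W : Submodule F V) :
    sympOrth ω (sympOrth ω W) = W := by
  simp only [sympOrth_eq_orthogonal ω halt]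
  exact LinearMap.BilinForm.orthogonal_orthogonal ((LinearMap.IsRefl.nondegenerate_iff_separatingLeft (refl_of_alt ω halt)).2 hnd) (refl_of_alt ω halt) W

lemma sympOrth_inf [FiniteDimensional F V] (halt : ∀ v, ω v v = 0)
    (hnd : ∀ v, (∀ w, ω v w = 0) → v = 0) (A B : Submodule F V) :
    sympOrth ω (A ⊓ B) = sympOrth ω A ⊔ sympOrth ω B := by
  conv_lhs => rw [← sympOrth_sympOrth ω halt hnd A, ← sympOrth_sympOrth ω halt hnd B,
    ← sympOrth_sup]
  rw [sympOrth_sympOrth ω halt hnd]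

end aux
/-- for coisotropic subspaces `X`, `Y` of a finite-dimensional
symplectic space `(V, ω)`, the image `L` of `X ∩ Y^⊥` in the symplectic quotient
`X/X^⊥` is the orthogonal complement of the image `K` of `X ∩ Y` with respect to
the induced symplectic form (expressed via representatives, since
`ω̄(v̄, ū) = ω(v,u)` for `v, u ∈ X`). -/
theorem coisotropic_quotient_orth {F : Type*} [Field F]
    {V : Type*} [AddCommGroup V] [Module F V] [FiniteDimensional F V]
    (ω : V →ₗ[F] V →ₗ[F] F)
    (halt : ∀ v, ω v v = 0) (hnd : ∀ v, (∀ w, ω v w = 0) → v = 0)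
    (X Y : Submodule F V) (hX : sympOrth ω X ≤ X) (hY : sympOrth ω Y ≤ Y) :
    ∀ v : X, (Submodule.mkQ ((sympOrth ω X).comap X.subtype) v ∈
        Submodule.map (Submodule.mkQ ((sympOrth ω X).comap X.subtype))
          ((X ⊓ sympOrth ω Y).comap X.subtype)
      ↔ ∀ u : X,
          Submodule.mkQ ((sympOrth ω X).comap X.subtype) u ∈
            Submodule.map (Submodule.mkQ ((sympOrth ω X).comap X.subtype))
              ((X ⊓ Y).comap X.subtype) →
          ω (v : V) (u : V) = 0) := by
  intro v
  set N := (sympOrth ω X).comap X.subtype with hN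
  have key : ∀ (S : Submodule F X) (w : X),
      Submodule.mkQ N w ∈ Submodule.map (Submodule.mkQ N) S ↔ w ∈ N ⊔ S := by
    intro S w
    rw [← Submodule.mem_comap, Submodule.comap_map_mkQ]
  rw [key]
  constructor
  · intro hv u hu
    rw [key] at hu
    rcases Submodule.mem_sup.1 hv with ⟨n, hn, w, hw, hvw⟩
    rcases Submodule.mem_sup.1 hu with ⟨m, hm, z, hz, huz⟩
    have hvV : (v : V) = (n : V) + (w : V) := by rw [← hvw]; rfl
    have huV : (u : V) = (m : V) + (z : V) := by rw [← huz]; rfl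
    have hn' : (n : V) ∈ sympOrth ω X := hn
    have hm' : (m : V) ∈ sympOrth ω X := hm
    have hw' : (w : V) ∈ sympOrth ω Y := hw.2
    have hz' : (z : V) ∈ Y := hz.2
    rw [hvV, huV]
    have h1 : ω (n : V) ((m : V) + (z : V)) = 0 := by
      have : (m : V) + (z : V) ∈ X := by rw [← huV]; exact u.2
      exact hn' _ this
    have h2 : ω (w : V) (m : V) = 0 := by
      rw [skew_of_alt ω halt, hm' _ w.2, neg_zero]
    have h3 : ω (w : V) (z : V) = 0 := hw' _ hz'
    simp only [map_add, LinearMap.add_apply] at h1 ⊢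
    linear_combination h1 + h2 + h3
  · intro h
    have hv' : (v : V) ∈ sympOrth ω (X ⊓ Y) := by
      intro w hw
      refine h ⟨w, hw.1⟩ ?_
      rw [key]
      exact Submodule.mem_sup_right hw
    rw [sympOrth_inf ω halt hnd] at hv'
    rcases Submodule.mem_sup.1 hv' with ⟨a, ha, b, hb, hab⟩
    have haX : a ∈ X := hX ha
    have hbX : b ∈ X := by
      have hb' : b = (v : V) - a := by rw [← hab]; abel
      rw [hb']
      exact X.sub_mem v.2 haX
    refine Submodule.mem_sup.2 ⟨⟨a, haX⟩, ha, ⟨b, hbX⟩, ⟨hbX, hb⟩, ?_⟩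
    exact Subtype.ext hab
end

section
/- Let T be a Lagrangian linear relation between finite-dimensional symplectic spaces over a finite field F of odd characteristic, and W(T) ≠ 0 a bounded operator satisfying a(w)W(T) = W(T)a(v) for all (v,w) ∈ T. If a pair (β,γ) satisfies a(γ)W(T) = W(T)a(β), then (β,γ) ∈ T. -/
/-- The Heisenberg operator `a(v)` on `ℓ²(Fⁿ)` as a linear operator. -/
noncomputable def heisOpL (F : Type*) [Field F] [Fintype F] {n : ℕ}
    (Exp : AddChar F ℂ) (v : (Fin n → F) × (Fin n → F)) :
    ((Fin n → F) → ℂ) →ₗ[ℂ] ((Fin n → F) → ℂ) where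
  toFun f := fun x => Exp (∑ j, (x j * v.2 j + (2 : F)⁻¹ * (v.1 j * v.2 j))) * f (x + v.1)
  map_add' f g := by funext x; simp [mul_add]
  map_smul' c f := by funext x; simp [smul_eq_mul]; ring

/-- The standard symplectic form on `Fⁿ ⊕ Fⁿ`. -/
def sympForm {F : Type*} [Field F] {n : ℕ}
    (v w : (Fin n → F) × (Fin n → F)) : F :=
  ∑ j, (v.1 j * w.2 j - v.2 j * w.1 j)


section aux
variable {F : Type*} [Field F] {k : ℕ}

lemma sympForm_add_left (p q r : (Fin k → F) × (Fin k → F)) :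
    sympForm (p + q) r = sympForm p r + sympForm q r := by
  simp only [sympForm, Prod.fst_add, Prod.snd_add, Pi.add_apply]
  rw [← Finset.sum_add_distrib]
  exact Finset.sum_congr rfl fun j _ => by ring

lemma sympForm_smul_left (c : F) (p q : (Fin k → F) × (Fin k → F)) :
    sympForm (c • p) q = c * sympForm p q := by
  simp only [sympForm, Prod.smul_fst, Prod.smul_snd, Pi.smul_apply, smul_eq_mul,
    Finset.mul_sum]
  exact Finset.sum_congr rfl fun j _ => by ring

lemma sympForm_anti (p q : (Fin k → F) × (Fin k → F)) :
    sympForm p q = - sympForm q p := by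
  rw [eq_neg_iff_add_eq_zero]
  simp only [sympForm]
  rw [← Finset.sum_add_distrib]
  exact Finset.sum_eq_zero fun j _ => by ring

lemma sympForm_add_right (p q r : (Fin k → F) × (Fin k → F)) :
    sympForm p (q + r) = sympForm p q + sympForm p r := by
  simp only [sympForm, Prod.fst_add, Prod.snd_add, Pi.add_apply]
  rw [← Finset.sum_add_distrib]
  exact Finset.sum_congr rfl fun j _ => by ring

lemma sympForm_smul_right (c : F) (p q : (Fin k → F) × (Fin k → F)) :
    sympForm p (c • q) = c * sympForm p q := by
  simp only [sympForm, Prod.smul_fst, Prod.smul_snd, Pi.smul_apply, smul_eq_mul,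
    Finset.mul_sum]
  exact Finset.sum_congr rfl fun j _ => by ring

lemma sympForm_self (p : (Fin k → F) × (Fin k → F)) : sympForm p p = 0 :=
  Finset.sum_eq_zero fun j _ => by ring

variable [Fintype F] (Exp : AddChar F ℂ)

lemma Exp_ne_zero (a : F) : Exp a ≠ 0 :=
  left_ne_zero_of_mul_eq_one (a := Exp a) (b := Exp (-a))
    (by rw [← AddChar.map_add_eq_mul, add_neg_cancel, AddChar.map_zero_eq_one])

lemma heisOpL_apply (v : (Fin k → F) × (Fin k → F)) (f : (Fin k → F) → ℂ)
    (x : Fin k → F) :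
    heisOpL F Exp v f x
      = Exp (∑ j, (x j * v.2 j + (2 : F)⁻¹ * (v.1 j * v.2 j))) * f (x + v.1) := rfl

lemma heisOpL_comp (h2 : (2 : F) ≠ 0) (p q : (Fin k → F) × (Fin k → F)) :
    heisOpL F Exp p ∘ₗ heisOpL F Exp q
      = Exp ((2 : F)⁻¹ * sympForm p q) • heisOpL F Exp (p + q) := by
  ext f x
  simp only [LinearMap.comp_apply, LinearMap.smul_apply, Pi.smul_apply, smul_eq_mul,
    heisOpL_apply]
  rw [show x + p.1 + q.1 = x + (p + q).1 by simp [add_assoc], ← mul_assoc, ← mul_assoc,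
    ← AddChar.map_add_eq_mul, ← AddChar.map_add_eq_mul]
  congr 2
  simp only [sympForm, Prod.fst_add, Prod.snd_add, Pi.add_apply, Finset.mul_sum]
  rw [← Finset.sum_add_distrib, ← Finset.sum_add_distrib]
  exact Finset.sum_congr rfl fun j _ => by field_simp; ring

lemma heisOpL_zero : heisOpL F Exp (0 : (Fin k → F) × (Fin k → F)) = LinearMap.id := by
  ext f x
  simp [heisOpL_apply]

lemma heisOpL_comp_neg (h2 : (2 : F) ≠ 0) (p : (Fin k → F) × (Fin k → F)) :
    heisOpL F Exp p ∘ₗ heisOpL F Exp (-p) = LinearMap.id := by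
  rw [heisOpL_comp Exp h2]
  have : sympForm p (-p) = 0 := by
    rw [show -p = (-1 : F) • p by simp, sympForm_anti, sympForm_smul_left, sympForm_self]
    ring
  simp [this, heisOpL_zero]

end aux

/-- A Lagrangian (maximal isotropic) linear relation between the standard
symplectic spaces `Fᵐ ⊕ Fᵐ` and `Fⁿ ⊕ Fⁿ`, with respect to the difference of
the standard symplectic forms. -/
def IsLagRel {F : Type*} [Field F] {m n : ℕ}
    (T : Submodule F (((Fin m → F) × (Fin m → F)) × ((Fin n → F) × (Fin n → F)))) :
    Prop :=
  (∀ p ∈ T, ∀ q ∈ T, sympForm p.1 q.1 - sympForm p.2 q.2 = 0) ∧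
  ∀ S, T ≤ S →
    (∀ p ∈ S, ∀ q ∈ S, sympForm p.1 q.1 - sympForm p.2 q.2 = 0) → S = T

/-- if `W(T) ≠ 0` intertwines along a Lagrangian relation `T` and
a pair `(β,γ)` satisfies `a(γ)W(T) = W(T)a(β)`, then `(β,γ) ∈ T`. -/
theorem weil_intertwiner_pair_mem {F : Type*} [Field F] [Fintype F]
    (hp : ringChar F ≠ 2) (Exp : AddChar F ℂ) (hExp : Exp ≠ 1) {m n : ℕ}
    (T : Submodule F (((Fin m → F) × (Fin m → F)) × ((Fin n → F) × (Fin n → F))))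
    (hT : IsLagRel T)
    (WT : ((Fin m → F) → ℂ) →ₗ[ℂ] ((Fin n → F) → ℂ)) (hWT0 : WT ≠ 0)
    (hTint : ∀ p ∈ T, heisOpL F Exp p.2 ∘ₗ WT = WT ∘ₗ heisOpL F Exp p.1)
    (β : (Fin m → F) × (Fin m → F)) (γ : (Fin n → F) × (Fin n → F))
    (hβγ : heisOpL F Exp γ ∘ₗ WT = WT ∘ₗ heisOpL F Exp β) :
    (β, γ) ∈ T := by

  have h2 : (2 : F) ≠ 0 := Ring.two_ne_zero hp
  -- right composition with a Heisenberg operator cannot kill WT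
  have hright : ∀ r : (Fin m → F) × (Fin m → F), WT ∘ₗ heisOpL F Exp r ≠ 0 := by
    intro r h
    apply hWT0
    calc WT = (WT ∘ₗ heisOpL F Exp r) ∘ₗ heisOpL F Exp (-r) := by
          rw [LinearMap.comp_assoc, heisOpL_comp_neg Exp h2, LinearMap.comp_id]
      _ = 0 := by rw [h]; ext f; simp
  -- key character identity
  have key : ∀ p ∈ T, Exp (sympForm β p.1 - sympForm γ p.2) = 1 := by
    intro p hpT
    have hint := hTint p hpT
    have e1 : Exp ((2:F)⁻¹ * sympForm γ p.2) • (heisOpL F Exp (γ + p.2) ∘ₗ WT)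
        = Exp ((2:F)⁻¹ * sympForm β p.1) • (WT ∘ₗ heisOpL F Exp (β + p.1)) := by
      rw [← LinearMap.smul_comp, ← heisOpL_comp Exp h2, ← LinearMap.comp_smul,
        ← heisOpL_comp Exp h2, LinearMap.comp_assoc, hint, ← LinearMap.comp_assoc, hβγ,
        LinearMap.comp_assoc]
    have e2 : Exp ((2:F)⁻¹ * sympForm p.2 γ) • (heisOpL F Exp (γ + p.2) ∘ₗ WT)
        = Exp ((2:F)⁻¹ * sympForm p.1 β) • (WT ∘ₗ heisOpL F Exp (β + p.1)) := by
      rw [show γ + p.2 = p.2 + γ from add_comm _ _,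
        show β + p.1 = p.1 + β from add_comm _ _,
        ← LinearMap.smul_comp, ← heisOpL_comp Exp h2, ← LinearMap.comp_smul,
        ← heisOpL_comp Exp h2, LinearMap.comp_assoc, hβγ, ← LinearMap.comp_assoc, hint,
        LinearMap.comp_assoc]
    obtain ⟨f, hf⟩ : ∃ f, (WT ∘ₗ heisOpL F Exp (β + p.1)) f ≠ 0 := by
      by_contra h; push_neg at h; exact hright _ (LinearMap.ext fun f => h f)
    obtain ⟨x, hx⟩ : ∃ x, (WT ∘ₗ heisOpL F Exp (β + p.1)) f x ≠ 0 := by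
      by_contra h; push_neg at h; exact hf (funext h)
    set c1 : ℂ := Exp ((2:F)⁻¹ * sympForm γ p.2) with hc1
    set c2 : ℂ := Exp ((2:F)⁻¹ * sympForm β p.1) with hc2
    set d1 : ℂ := Exp ((2:F)⁻¹ * sympForm p.2 γ) with hd1
    set d2 : ℂ := Exp ((2:F)⁻¹ * sympForm p.1 β) with hd2
    set X : ℂ := (heisOpL F Exp (γ + p.2) ∘ₗ WT) f x with hX
    set Y : ℂ := (WT ∘ₗ heisOpL F Exp (β + p.1)) f x with hY
    have E1 : c1 * X = c2 * Y := by
      have := congrFun (congrArg (fun L => L f) e1) x; simpa [hX, hY] using this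
    have E2 : d1 * X = d2 * Y := by
      have := congrFun (congrArg (fun L => L f) e2) x; simpa [hX, hY] using this
    have hsc : d1 * c2 = c1 * d2 :=
      mul_right_cancel₀ hx (by linear_combination c1 * E2 - d1 * E1)
    rw [hd1, hd2, hc1, hc2, sympForm_anti p.2 γ, sympForm_anti p.1 β,
      ← AddChar.map_add_eq_mul, ← AddChar.map_add_eq_mul] at hsc
    have hhalf : Exp (sympForm β p.1 - sympForm γ p.2)
        = Exp ((2:F)⁻¹ * -sympForm γ p.2 + (2:F)⁻¹ * sympForm β p.1)
          * Exp ((2:F)⁻¹ * -sympForm γ p.2 + (2:F)⁻¹ * sympForm β p.1) := by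
      rw [← AddChar.map_add_eq_mul]; congr 1; field_simp; ring
    rw [hhalf]
    nth_rewrite 2 [hsc]
    rw [← AddChar.map_add_eq_mul,
      show ((2:F)⁻¹ * -sympForm γ p.2 + (2:F)⁻¹ * sympForm β p.1)
          + ((2:F)⁻¹ * sympForm γ p.2 + (2:F)⁻¹ * -sympForm β p.1) = (0:F) by ring,
      AddChar.map_zero_eq_one]
  -- deduce the orthogonality in F
  have hzero : ∀ p ∈ T, sympForm β p.1 - sympForm γ p.2 = 0 := by
    intro p hpT
    by_contra hc
    apply hExp
    ext a
    have hmem := T.smul_mem (a / (sympForm β p.1 - sympForm γ p.2)) hpT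
    have := key _ hmem
    rw [Prod.smul_fst, Prod.smul_snd, sympForm_smul_right, sympForm_smul_right,
      ← mul_sub, div_mul_cancel₀ _ hc] at this
    simpa [AddChar.one_apply] using this
  -- extend T by (β,γ) and use maximality
  set x : ((Fin m → F) × (Fin m → F)) × ((Fin n → F) × (Fin n → F)) := (β, γ) with hxdef
  have hiso : ∀ p ∈ T ⊔ Submodule.span F {x}, ∀ q ∈ T ⊔ Submodule.span F {x},
      sympForm p.1 q.1 - sympForm p.2 q.2 = 0 := by
    intro p hp' q hq'
    rcases Submodule.mem_sup.mp hp' with ⟨y, hy, z, hz, rfl⟩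
    rcases Submodule.mem_span_singleton.mp hz with ⟨a, rfl⟩
    rcases Submodule.mem_sup.mp hq' with ⟨y', hy', z', hz', rfl⟩
    rcases Submodule.mem_span_singleton.mp hz' with ⟨a', rfl⟩
    have h1 := hT.1 y hy y' hy'
    have h3 := hzero y' hy'
    have h4 := hzero y hy
    simp only [Prod.fst_add, Prod.snd_add, Prod.smul_fst, Prod.smul_snd, hxdef,
      sympForm_add_left, sympForm_add_right, sympForm_smul_left, sympForm_smul_right]
    have hy1 : sympForm y.1 β = - sympForm β y.1 := sympForm_anti _ _
    have hy2 : sympForm y.2 γ = - sympForm γ y.2 := sympForm_anti _ _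
    have hbb : sympForm β β = (0:F) := sympForm_self _
    have hgg : sympForm γ γ = (0:F) := sympForm_self _
    linear_combination h1 + a' * hy1 - a' * hy2 - a' * h4 + a * h3
      + a * a' * hbb - a * a' * hgg
  have hS := hT.2 _ le_sup_left hiso
  have hx : x ∈ T ⊔ Submodule.span F {x} :=
    Submodule.mem_sup_right (Submodule.mem_span_singleton_self x)
  rwa [hS] at hx
end
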